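/- arXiv:2201.02681 — 6 statements merged into one kernel-verified Lean document; each statement's English description precedes it below -/
import Mathlib

section
/- Let r_b > 1, let f : ℝ² → ℝ be measurable, and let p ∈ [1,2). Then sup_{ν∈ℝ} sup_{r∈[1,r_b]} ∫_ℝ ∫_ℝ |w|^p |w² − L²(1/r² − 1/r_b²) − 2ν|^{−p/2} |f(w,L)| dw dL ≤ 2 ‖f‖_{L¹(ℝ²)} + (4/(2−p)) ∫_ℝ sup_{w∈ℝ} |w f(w,L)| dL. -/
open MeasureTheory ENNReal

open Set

lemma uwe_subst {s : Set ℝ} {φ φ' : ℝ → ℝ}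
    (hs : MeasurableSet s) (hφ' : ∀ x ∈ s, HasDerivWithinAt φ (φ' x) s x)
    (hφ : Set.InjOn φ s) (g : ℝ → ℝ≥0∞) :
    ∫⁻ x in φ '' s, g x = ∫⁻ x in s, ENNReal.ofReal |φ' x| * g (φ x) := by
  simpa only [ContinuousLinearMap.det_toSpanSingleton] using
    MeasureTheory.lintegral_image_eq_lintegral_abs_det_fderiv_mul volume hs
      (fun x hx => (hφ' x hx).hasFDerivWithinAt) hφ g

lemma uwe_J {p : ℝ} (hp2 : p < 2) {c : ℝ} (hc : 0 < c) :
    ∫⁻ t in Set.Ioo (0:ℝ) c, ENNReal.ofReal (t ^ (-(p/2))) =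
      ENNReal.ofReal (c ^ ((2-p)/2) * (2/(2-p))) := by
  have hr : (-1:ℝ) < -(p/2) := by linarith
  have hint : IntegrableOn (fun t : ℝ => t ^ (-(p/2))) (Set.Ioo 0 c) := by
    have := (intervalIntegral.intervalIntegrable_rpow' (a := (0:ℝ)) (b := c) hr)
    exact this.1.mono_set Set.Ioo_subset_Ioc_self
  have hnn : 0 ≤ᵐ[volume.restrict (Set.Ioo (0:ℝ) c)] fun t : ℝ => t ^ (-(p/2)) := by
    refine (ae_restrict_iff' measurableSet_Ioo).2 (Filter.Eventually.of_forall ?_)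
    intro t ht
    exact Real.rpow_nonneg ht.1.le _
  rw [← ofReal_integral_eq_lintegral_ofReal hint hnn]
  congr 1
  have h1 : ∫ t in Set.Ioo (0:ℝ) c, t ^ (-(p/2)) = ∫ t in (0:ℝ)..c, t ^ (-(p/2)) := by
    rw [intervalIntegral.integral_of_le hc.le, MeasureTheory.integral_Ioc_eq_integral_Ioo]
  rw [h1, integral_rpow (Or.inl hr), Real.zero_rpow (by linarith : -(p/2) + 1 ≠ 0)]
  have he : -(p/2) + 1 = (2-p)/2 := by ring
  rw [he, sub_zero]
  field_simp

lemma uwe_U {p : ℝ} (hp1 : 1 ≤ p) (hp2 : p < 2) {a : ℝ} (ha : 0 < a) :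
    ∫⁻ u in Set.Ioo (2*a/3) (2*a), ENNReal.ofReal (u ^ ((p-2)/2) / |u - a| ^ (p/2))
      ≤ ENNReal.ofReal (4/(2-p)) := by
  have h2p : (0:ℝ) < 2 - p := by linarith
  set h : ℝ → ℝ≥0∞ := fun u => ENNReal.ofReal (u ^ ((p-2)/2) / |u - a| ^ (p/2)) with hh
  -- split the interval
  have hsplit : Set.Ioo (2*a/3) (2*a) ⊆ (Set.Ioo (2*a/3) a ∪ {a}) ∪ Set.Ioo a (2*a) := by
    intro u hu
    rcases lt_trichotomy u a with h1 | h1 | h1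
    · exact Or.inl (Or.inl ⟨hu.1, h1⟩)
    · exact Or.inl (Or.inr h1)
    · exact Or.inr ⟨h1, hu.2⟩
  have step1 : ∫⁻ u in Set.Ioo (2*a/3) (2*a), h u
      ≤ (∫⁻ u in Set.Ioo (2*a/3) a, h u) + ∫⁻ u in Set.Ioo a (2*a), h u := by
    calc ∫⁻ u in Set.Ioo (2*a/3) (2*a), h u
        ≤ ∫⁻ u in (Set.Ioo (2*a/3) a ∪ {a}) ∪ Set.Ioo a (2*a), h u :=
          lintegral_mono_set hsplit
      _ ≤ (∫⁻ u in Set.Ioo (2*a/3) a ∪ {a}, h u) + ∫⁻ u in Set.Ioo a (2*a), h u :=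
          lintegral_union_le _ _ _
      _ ≤ ((∫⁻ u in Set.Ioo (2*a/3) a, h u) + ∫⁻ u in ({a} : Set ℝ), h u)
            + ∫⁻ u in Set.Ioo a (2*a), h u := by
          gcongr
          exact lintegral_union_le _ _ _
      _ = (∫⁻ u in Set.Ioo (2*a/3) a, h u) + ∫⁻ u in Set.Ioo a (2*a), h u := by
          rw [setLIntegral_measure_zero ({a} : Set ℝ) _ (by simp), add_zero]
  -- left piece
  have hleft : ∫⁻ u in Set.Ioo (2*a/3) a, h u
      ≤ ENNReal.ofReal (2/(2-p)) := by
    have hb : ∀ u ∈ Set.Ioo (2*a/3) a, h u ≤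
        ENNReal.ofReal ((2*a/3) ^ ((p-2)/2)) * ENNReal.ofReal ((a - u) ^ (-(p/2))) := by
      intro u hu
      have hu0 : (0:ℝ) < 2*a/3 := by linarith
      have hau : 0 < a - u := by linarith [hu.2]
      rw [← ENNReal.ofReal_mul (by positivity)]
      apply ENNReal.ofReal_le_ofReal
      have h1 : u ^ ((p-2)/2) ≤ (2*a/3) ^ ((p-2)/2) :=
        Real.rpow_le_rpow_of_nonpos hu0 hu.1.le (by linarith)
      have h2 : |u - a| ^ (p/2) = (a - u) ^ (p/2) := by
        rw [abs_of_neg (by linarith), neg_sub]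
      rw [h2, Real.rpow_neg hau.le, div_eq_mul_inv]
      exact mul_le_mul_of_nonneg_right h1 (by positivity)
    calc ∫⁻ u in Set.Ioo (2*a/3) a, h u
        ≤ ∫⁻ u in Set.Ioo (2*a/3) a,
            ENNReal.ofReal ((2*a/3) ^ ((p-2)/2)) * ENNReal.ofReal ((a - u) ^ (-(p/2))) :=
          setLIntegral_mono' measurableSet_Ioo hb
      _ = ENNReal.ofReal ((2*a/3) ^ ((p-2)/2)) *
            ∫⁻ u in Set.Ioo (2*a/3) a, ENNReal.ofReal ((a - u) ^ (-(p/2))) :=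
          lintegral_const_mul' _ _ ENNReal.ofReal_ne_top
      _ = ENNReal.ofReal ((2*a/3) ^ ((p-2)/2)) *
            ∫⁻ t in Set.Ioo (0:ℝ) (a/3), ENNReal.ofReal (t ^ (-(p/2))) := by
          congr 1
          have himg : Set.Ioo (0:ℝ) (a/3) = (fun u => a - u) '' Set.Ioo (2*a/3) a := by
            rw [Set.image_const_sub_Ioo]; congr 1 <;> ring
          rw [himg, uwe_subst (φ := fun u => a - u) (φ' := fun _ => (-1:ℝ)) measurableSet_Ioo
            (fun x _ => by simpa using (hasDerivWithinAt_id x _).const_sub a)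
            (fun x _ y _ hxy => by dsimp at hxy; linarith)
            (fun t => ENNReal.ofReal (t ^ (-(p/2))))]
          simp
      _ ≤ ENNReal.ofReal (2/(2-p)) := by
          rw [uwe_J hp2 (by linarith : (0:ℝ) < a/3),
            ← ENNReal.ofReal_mul (by positivity)]
          apply ENNReal.ofReal_le_ofReal
          have key : (2*a/3) ^ ((p-2)/2) * (a/3) ^ ((2-p)/2) ≤ 1 := by
            have e1 : ((p-2)/2) = -((2-p)/2) := by ring
            have hpos : (0:ℝ) < (2*a/3) ^ ((2-p)/2) :=
              Real.rpow_pos_of_pos (by linarith) _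
            have hle : (a/3) ^ ((2-p)/2) ≤ (2*a/3) ^ ((2-p)/2) :=
              Real.rpow_le_rpow (by linarith) (by linarith) (by linarith)
            rw [e1, Real.rpow_neg (by linarith)]
            have := (div_le_one hpos).2 hle
            rwa [div_eq_inv_mul] at this
          calc (2*a/3) ^ ((p-2)/2) * ((a/3) ^ ((2-p)/2) * (2/(2-p)))
              = ((2*a/3) ^ ((p-2)/2) * (a/3) ^ ((2-p)/2)) * (2/(2-p)) := by ring
            _ ≤ 1 * (2/(2-p)) := by
                apply mul_le_mul_of_nonneg_right key (by positivity)
            _ = 2/(2-p) := one_mul _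
  -- right piece
  have hright : ∫⁻ u in Set.Ioo a (2*a), h u ≤ ENNReal.ofReal (2/(2-p)) := by
    have hb : ∀ u ∈ Set.Ioo a (2*a), h u ≤
        ENNReal.ofReal (a ^ ((p-2)/2)) * ENNReal.ofReal ((u - a) ^ (-(p/2))) := by
      intro u hu
      have hau : 0 < u - a := by linarith [hu.1]
      rw [← ENNReal.ofReal_mul (by positivity)]
      apply ENNReal.ofReal_le_ofReal
      have h1 : u ^ ((p-2)/2) ≤ a ^ ((p-2)/2) :=
        Real.rpow_le_rpow_of_nonpos ha hu.1.le (by linarith)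
      have h2 : |u - a| ^ (p/2) = (u - a) ^ (p/2) := by rw [abs_of_pos hau]
      rw [h2, Real.rpow_neg hau.le, div_eq_mul_inv]
      exact mul_le_mul_of_nonneg_right h1 (by positivity)
    calc ∫⁻ u in Set.Ioo a (2*a), h u
        ≤ ∫⁻ u in Set.Ioo a (2*a),
            ENNReal.ofReal (a ^ ((p-2)/2)) * ENNReal.ofReal ((u - a) ^ (-(p/2))) :=
          setLIntegral_mono' measurableSet_Ioo hb
      _ = ENNReal.ofReal (a ^ ((p-2)/2)) *
            ∫⁻ u in Set.Ioo a (2*a), ENNReal.ofReal ((u - a) ^ (-(p/2))) :=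
          lintegral_const_mul' _ _ ENNReal.ofReal_ne_top
      _ = ENNReal.ofReal (a ^ ((p-2)/2)) *
            ∫⁻ t in Set.Ioo (0:ℝ) a, ENNReal.ofReal (t ^ (-(p/2))) := by
          congr 1
          have himg : Set.Ioo (0:ℝ) a = (fun u => u - a) '' Set.Ioo a (2*a) := by
            rw [Set.image_sub_const_Ioo]; congr 1 <;> ring
          rw [himg, uwe_subst (φ := fun u => u - a) (φ' := fun _ => (1:ℝ)) measurableSet_Ioo
            (fun x _ => by simpa using (hasDerivWithinAt_id x _).sub_const a)
            (fun x _ y _ hxy => by dsimp at hxy; linarith)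
            (fun t => ENNReal.ofReal (t ^ (-(p/2))))]
          simp
      _ ≤ ENNReal.ofReal (2/(2-p)) := by
          rw [uwe_J hp2 ha, ← ENNReal.ofReal_mul (by positivity)]
          apply ENNReal.ofReal_le_ofReal
          have key : a ^ ((p-2)/2) * a ^ ((2-p)/2) = 1 := by
            rw [← Real.rpow_add ha, show (p-2)/2 + (2-p)/2 = 0 by ring, Real.rpow_zero]
          refine le_of_eq ?_
          calc a ^ ((p-2)/2) * (a ^ ((2-p)/2) * (2/(2-p)))
              = (a ^ ((p-2)/2) * a ^ ((2-p)/2)) * (2/(2-p)) := by ring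
            _ = 2/(2-p) := by rw [key, one_mul]
  calc ∫⁻ u in Set.Ioo (2*a/3) (2*a), h u
      ≤ (∫⁻ u in Set.Ioo (2*a/3) a, h u) + ∫⁻ u in Set.Ioo a (2*a), h u := step1
    _ ≤ ENNReal.ofReal (2/(2-p)) + ENNReal.ofReal (2/(2-p)) := add_le_add hleft hright
    _ = ENNReal.ofReal (4/(2-p)) := by
        rw [← ENNReal.ofReal_add (by positivity) (by positivity)]
        congr 1
        ring

lemma uwe_K {p : ℝ} (hp1 : 1 ≤ p) (hp2 : p < 2) (a : ℝ) :
    ∫⁻ w in {w : ℝ | |w^2 - a| < w^2/2},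
        ENNReal.ofReal (|w| ^ (p-1) / |w^2 - a| ^ (p/2))
      ≤ ENNReal.ofReal (4/(2-p)) := by
  rcases le_or_gt a 0 with ha | ha
  · have hempty : {w : ℝ | |w^2 - a| < w^2/2} = ∅ := by
      rw [Set.eq_empty_iff_forall_notMem]
      intro w hw
      simp only [Set.mem_setOf_eq] at hw
      have := le_abs_self (w^2 - a)
      nlinarith [sq_nonneg w]
    rw [hempty, Measure.restrict_empty, lintegral_zero_measure]
    exact zero_le
  · set s1 := Real.sqrt (2*a/3) with hs1
    set s2 := Real.sqrt (2*a) with hs2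
    have hs1pos : 0 < s1 := Real.sqrt_pos.2 (by linarith)
    have hs1sq : s1^2 = 2*a/3 := Real.sq_sqrt (by linarith)
    have hs2sq : s2^2 = 2*a := Real.sq_sqrt (by linarith)
    set h : ℝ → ℝ≥0∞ := fun w => ENNReal.ofReal (|w| ^ (p-1) / |w^2 - a| ^ (p/2)) with hh
    set g : ℝ → ℝ≥0∞ := fun u => ENNReal.ofReal (u ^ ((p-2)/2) / |u - a| ^ (p/2)) with hg
    -- pointwise identity used on both sides
    have hpoint : ∀ w : ℝ, w ≠ 0 → ENNReal.ofReal |2*w| * g (w^2) = 2 * h w := by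
      intro w hw
      have hw0 : 0 < |w| := abs_pos.2 hw
      have e1 : (w^2 : ℝ) ^ ((p-2)/2) = |w| ^ (p-2) := by
        rw [← sq_abs, ← Real.rpow_natCast |w| 2, ← Real.rpow_mul (abs_nonneg w)]
        norm_num
        rw [show (2:ℝ) * ((p - 2) / 2) = p - 2 from by ring]
      have e2 : |2*w| = 2 * |w| := by rw [abs_mul]; norm_num
      rw [hg, hh]
      dsimp only
      rw [e1, e2, ← ENNReal.ofReal_mul (by positivity)]
      rw [show (2:ℝ≥0∞) = ENNReal.ofReal 2 by simp, ← ENNReal.ofReal_mul (by norm_num)]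
      congr 1
      rw [show p - 1 = 1 + (p-2) by ring, Real.rpow_add hw0, Real.rpow_one]
      ring
    -- the subset property
    have hsub : {w : ℝ | |w^2 - a| < w^2/2} ⊆ Set.Ioo (-s2) (-s1) ∪ Set.Ioo s1 s2 := by
      intro w hw
      simp only [Set.mem_setOf_eq] at hw
      have habs := abs_lt.1 hw
      have h1 : 2*a/3 < w^2 := by linarith [habs.1]
      have h2 : w^2 < 2*a := by linarith [habs.2]
      have hwne : w ≠ 0 := by
        intro h0
        rw [h0] at h1
        simp at h1
        linarith
      have hlt2 : |w| < s2 := by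
        rw [hs2]
        have := (Real.lt_sqrt (abs_nonneg w)).2 (by rwa [sq_abs])
        exact this
      have hlt1 : s1 < |w| := by
        rw [hs1]
        exact (Real.sqrt_lt' (abs_pos.2 hwne)).2 (by rwa [sq_abs])
      rcases le_or_gt 0 w with hw0 | hw0
      · right
        rw [abs_of_nonneg hw0] at hlt1 hlt2
        exact ⟨hlt1, hlt2⟩
      · left
        rw [abs_of_neg hw0] at hlt1 hlt2
        constructor <;> linarith
    -- substitution on the positive side
    have himgP : Set.Ioo (2*a/3) (2*a) = (fun w => w^2) '' Set.Ioo s1 s2 := by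
      ext u
      constructor
      · intro hu
        have hu0 : (0:ℝ) ≤ u := by nlinarith [hu.1]
        refine ⟨Real.sqrt u, ⟨?_, ?_⟩, Real.sq_sqrt hu0⟩
        · exact Real.sqrt_lt_sqrt (by linarith) hu.1
        · exact Real.sqrt_lt_sqrt hu0 hu.2
      · rintro ⟨w, ⟨hw1, hw2⟩, rfl⟩
        constructor
        · rw [← hs1sq]; exact pow_lt_pow_left₀ hw1 hs1pos.le (by norm_num)
        · rw [← hs2sq]; exact pow_lt_pow_left₀ hw2 (by linarith) (by norm_num)
    have hinjP : Set.InjOn (fun w : ℝ => w^2) (Set.Ioo s1 s2) := by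
      intro x hx y hy hxy
      dsimp at hxy
      have : (x - y) * (x + y) = 0 := by linear_combination hxy
      rcases mul_eq_zero.1 this with h0 | h0
      · linarith
      · exfalso; have := hx.1; have := hy.1; nlinarith
    have hderiv : ∀ x ∈ Set.Ioo s1 s2, HasDerivWithinAt (fun w : ℝ => w^2) (2*x) (Set.Ioo s1 s2) x := by
      intro x _
      simpa using (hasDerivAt_pow 2 x).hasDerivWithinAt
    have hP : 2 * ∫⁻ w in Set.Ioo s1 s2, h w = ∫⁻ u in Set.Ioo (2*a/3) (2*a), g u := by
      rw [himgP, uwe_subst measurableSet_Ioo hderiv hinjP g]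
      rw [← lintegral_const_mul' _ _ (by norm_num : (2:ℝ≥0∞) ≠ ⊤)]
      refine setLIntegral_congr_fun measurableSet_Ioo ?_
      intro w hw
      exact (hpoint w (by intro h0; rw [h0] at hw; exact absurd hw.1 (by simpa using hs1pos.le))).symm
    -- substitution on the negative side
    have himgN : Set.Ioo (2*a/3) (2*a) = (fun w => w^2) '' Set.Ioo (-s2) (-s1) := by
      ext u
      constructor
      · intro hu
        have hu0 : (0:ℝ) ≤ u := by nlinarith [hu.1]
        refine ⟨-Real.sqrt u, ⟨?_, ?_⟩, by
          show (-Real.sqrt u)^2 = u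
          rw [neg_sq]; exact Real.sq_sqrt hu0⟩
        · simp only [neg_lt_neg_iff]
          exact Real.sqrt_lt_sqrt hu0 hu.2
        · simp only [neg_lt_neg_iff]
          exact Real.sqrt_lt_sqrt (by linarith) hu.1
      · rintro ⟨w, ⟨hw1, hw2⟩, rfl⟩
        show w^2 ∈ Set.Ioo (2*a/3) (2*a)
        rw [show w^2 = (-w)^2 from (neg_sq w).symm]
        constructor
        · rw [← hs1sq]; exact pow_lt_pow_left₀ (by linarith) hs1pos.le (by norm_num)
        · rw [← hs2sq]; exact pow_lt_pow_left₀ (by linarith) (by linarith) (by norm_num)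
    have hinjN : Set.InjOn (fun w : ℝ => w^2) (Set.Ioo (-s2) (-s1)) := by
      intro x hx y hy hxy
      dsimp at hxy
      have : (x - y) * (x + y) = 0 := by linear_combination hxy
      rcases mul_eq_zero.1 this with h0 | h0
      · linarith
      · exfalso; have := hx.2; have := hy.2; nlinarith
    have hderivN : ∀ x ∈ Set.Ioo (-s2) (-s1),
        HasDerivWithinAt (fun w : ℝ => w^2) (2*x) (Set.Ioo (-s2) (-s1)) x := by
      intro x _
      simpa using (hasDerivAt_pow 2 x).hasDerivWithinAt
    have hN : 2 * ∫⁻ w in Set.Ioo (-s2) (-s1), h w = ∫⁻ u in Set.Ioo (2*a/3) (2*a), g u := by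
      rw [himgN, uwe_subst measurableSet_Ioo hderivN hinjN g]
      rw [← lintegral_const_mul' _ _ (by norm_num : (2:ℝ≥0∞) ≠ ⊤)]
      refine setLIntegral_congr_fun measurableSet_Ioo ?_
      intro w hw
      refine (hpoint w ?_).symm
      intro h0; rw [h0] at hw
      have := hw.2
      simp at this
      linarith
    -- conclude
    have hU := uwe_U hp1 hp2 ha
    have hPle : ∫⁻ w in Set.Ioo s1 s2, h w ≤ ENNReal.ofReal (4/(2-p)) / 2 := by
      rw [ENNReal.le_div_iff_mul_le (Or.inl (by norm_num)) (Or.inl (by norm_num))]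
      rw [mul_comm]
      rw [hP]
      exact hU
    have hNle : ∫⁻ w in Set.Ioo (-s2) (-s1), h w ≤ ENNReal.ofReal (4/(2-p)) / 2 := by
      rw [ENNReal.le_div_iff_mul_le (Or.inl (by norm_num)) (Or.inl (by norm_num))]
      rw [mul_comm]
      rw [hN]
      exact hU
    calc ∫⁻ w in {w : ℝ | |w^2 - a| < w^2/2}, h w
        ≤ ∫⁻ w in Set.Ioo (-s2) (-s1) ∪ Set.Ioo s1 s2, h w := lintegral_mono_set hsub
      _ ≤ (∫⁻ w in Set.Ioo (-s2) (-s1), h w) + ∫⁻ w in Set.Ioo s1 s2, h w :=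
          lintegral_union_le _ _ _
      _ ≤ ENNReal.ofReal (4/(2-p)) / 2 + ENNReal.ofReal (4/(2-p)) / 2 := add_le_add hNle hPle
      _ = ENNReal.ofReal (4/(2-p)) := ENNReal.add_halves _

lemma uwe_line {p : ℝ} (hp1 : 1 ≤ p) (hp2 : p < 2) (a : ℝ) (g : ℝ → ℝ) (hg : Measurable g) :
    ∫⁻ w, ENNReal.ofReal (|w| ^ p / |w^2 - a| ^ (p/2) * |g w|)
      ≤ 2 * (∫⁻ w, ENNReal.ofReal |g w|)
        + ENNReal.ofReal (4/(2-p)) * ⨆ w : ℝ, ENNReal.ofReal |w * g w| := by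
  set S : ℝ≥0∞ := ⨆ w : ℝ, ENNReal.ofReal |w * g w| with hS
  set B : Set ℝ := {w : ℝ | |w^2 - a| < w^2/2} with hB
  have hBmeas : MeasurableSet B := by
    apply measurableSet_lt
    · exact (((continuous_pow 2).sub continuous_const).abs).measurable
    · exact ((continuous_pow 2).div_const 2).measurable
  set k : ℝ → ℝ≥0∞ := B.indicator (fun w => ENNReal.ofReal (|w| ^ (p-1) / |w^2 - a| ^ (p/2)))
    with hk
  have hkmeas : Measurable k := by
    apply Measurable.indicator _ hBmeas
    apply ENNReal.measurable_ofReal.comp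
    apply Measurable.div
    · exact (continuous_abs.rpow_const (fun x => Or.inr (by linarith))).measurable
    · exact ((((continuous_pow 2).sub continuous_const).abs).rpow_const
        (fun x => Or.inr (by positivity))).measurable
  have key : ∀ w : ℝ, ENNReal.ofReal (|w| ^ p / |w^2 - a| ^ (p/2) * |g w|)
      ≤ 2 * ENNReal.ofReal |g w| + k w * S := by
    intro w
    by_cases hw0 : w = 0
    · subst hw0
      simp only [abs_zero, Real.zero_rpow (by linarith : p ≠ 0), zero_div, zero_mul,
        ENNReal.ofReal_zero]
      exact zero_le
    by_cases hwB : w ∈ B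
    · have e : |w| ^ p / |w^2 - a| ^ (p/2) * |g w|
          = |w| ^ (p-1) / |w^2 - a| ^ (p/2) * |w * g w| := by
        rw [abs_mul, show p = (p-1) + 1 by ring, Real.rpow_add (abs_pos.2 hw0), Real.rpow_one]
        ring
      rw [e, ENNReal.ofReal_mul (by positivity)]
      have h1 : ENNReal.ofReal |w * g w| ≤ S := le_iSup (fun w => ENNReal.ofReal |w * g w|) w
      have h2 : k w = ENNReal.ofReal (|w| ^ (p-1) / |w^2 - a| ^ (p/2)) :=
        Set.indicator_of_mem hwB _
      rw [← h2]
      exact le_add_left (mul_le_mul_right h1 _)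
    · have hD : w^2/2 ≤ |w^2 - a| := not_lt.1 hwB
      have hw2 : (0:ℝ) < w^2 := by positivity
      have hDpos : (0:ℝ) < |w^2 - a| := lt_of_lt_of_le (by linarith) hD
      have e1 : |w| ^ p = (w^2 : ℝ) ^ (p/2) := by
        rw [← sq_abs, ← Real.rpow_natCast |w| 2, ← Real.rpow_mul (abs_nonneg w)]
        norm_num
        rw [show (2:ℝ) * (p/2) = p from by ring]
      have hle : |w| ^ p / |w^2 - a| ^ (p/2) ≤ 2 := by
        rw [e1, ← Real.div_rpow hw2.le hDpos.le]
        calc (w^2 / |w^2 - a|) ^ (p/2) ≤ (2:ℝ) ^ (p/2) := by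
              apply Real.rpow_le_rpow (by positivity) _ (by linarith)
              rw [div_le_iff₀ hDpos]
              linarith
          _ ≤ (2:ℝ) ^ (1:ℝ) :=
              Real.rpow_le_rpow_of_exponent_le (by norm_num) (by linarith)
          _ = 2 := Real.rpow_one 2
      calc ENNReal.ofReal (|w| ^ p / |w^2 - a| ^ (p/2) * |g w|)
          ≤ ENNReal.ofReal (2 * |g w|) :=
            ENNReal.ofReal_le_ofReal
              (mul_le_mul_of_nonneg_right hle (abs_nonneg _))
        _ = 2 * ENNReal.ofReal |g w| := by
            rw [ENNReal.ofReal_mul (by norm_num)]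
            norm_num
        _ ≤ 2 * ENNReal.ofReal |g w| + k w * S := le_self_add
  calc ∫⁻ w, ENNReal.ofReal (|w| ^ p / |w^2 - a| ^ (p/2) * |g w|)
      ≤ ∫⁻ w, (2 * ENNReal.ofReal |g w| + k w * S) := lintegral_mono key
    _ = (∫⁻ w, 2 * ENNReal.ofReal |g w|) + ∫⁻ w, k w * S := by
        apply lintegral_add_left
        exact measurable_const.mul (ENNReal.measurable_ofReal.comp hg.abs)
    _ = 2 * (∫⁻ w, ENNReal.ofReal |g w|) + (∫⁻ w, k w) * S := by
        rw [lintegral_const_mul' _ _ (by norm_num : (2:ℝ≥0∞) ≠ ⊤),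
          lintegral_mul_const'' _ hkmeas.aemeasurable]
    _ ≤ 2 * (∫⁻ w, ENNReal.ofReal |g w|) + ENNReal.ofReal (4/(2-p)) * S := by
        gcongr
        rw [hk, lintegral_indicator hBmeas]
        exact uwe_K hp1 hp2 a

/-- **Uniform weighted estimate (Lemma on finiteness of `g_i`, `g_e`):**
for measurable `f : ℝ² → ℝ`, `r_b > 1` and `p ∈ [1,2)`,
`sup_{ν∈ℝ} sup_{r∈[1,r_b]} ∫∫ |w|^p |w² − L²(1/r² − 1/r_b²) − 2ν|^{−p/2} |f(w,L)| dw dL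
  ≤ 2‖f‖_{L¹} + (4/(2−p)) ∫ sup_w |w f(w,L)| dL`. -/
theorem uniform_weighted_estimate (rb : ℝ) (hrb : 1 < rb)
    (f : ℝ × ℝ → ℝ) (hf : Measurable f) (p : ℝ) (hp1 : 1 ≤ p) (hp2 : p < 2) :
    (⨆ ν : ℝ, ⨆ r ∈ Set.Icc (1 : ℝ) rb,
      ∫⁻ L : ℝ, ∫⁻ w : ℝ,
        ENNReal.ofReal
          (|w| ^ p / |w ^ 2 - L ^ 2 * (1 / r ^ 2 - 1 / rb ^ 2) - 2 * ν| ^ (p / 2)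
            * |f (w, L)|))
      ≤ 2 * (∫⁻ q : ℝ × ℝ, ENNReal.ofReal |f q|)
        + ENNReal.ofReal (4 / (2 - p))
          * ∫⁻ L : ℝ, ⨆ w : ℝ, ENNReal.ofReal |w * f (w, L)| := by
  refine iSup_le fun ν => iSup_le fun r => iSup_le fun hr => ?_
  set c : ℝ := 1 / r ^ 2 - 1 / rb ^ 2 with hc
  have hmeasF : Measurable fun q : ℝ × ℝ => ENNReal.ofReal |f (q.2, q.1)| :=
    ENNReal.measurable_ofReal.comp ((hf.comp measurable_swap).abs)
  have step : ∀ L : ℝ,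
      (∫⁻ w : ℝ, ENNReal.ofReal
          (|w| ^ p / |w ^ 2 - L ^ 2 * c - 2 * ν| ^ (p / 2) * |f (w, L)|))
        ≤ 2 * (∫⁻ w, ENNReal.ofReal |f (w, L)|)
          + ENNReal.ofReal (4/(2-p)) * ⨆ w : ℝ, ENNReal.ofReal |w * f (w, L)| := by
    intro L
    have hgL : Measurable fun w : ℝ => f (w, L) :=
      hf.comp (measurable_id.prodMk measurable_const)
    have := uwe_line hp1 hp2 (L^2 * c + 2*ν) (fun w => f (w, L)) hgL
    simpa only [show ∀ w : ℝ, w^2 - L^2*c - 2*ν = w^2 - (L^2*c + 2*ν) from fun w => by ring]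
      using this
  calc ∫⁻ L : ℝ, ∫⁻ w : ℝ, ENNReal.ofReal
          (|w| ^ p / |w ^ 2 - L ^ 2 * c - 2 * ν| ^ (p / 2) * |f (w, L)|)
      ≤ ∫⁻ L : ℝ, (2 * (∫⁻ w, ENNReal.ofReal |f (w, L)|)
          + ENNReal.ofReal (4/(2-p)) * ⨆ w : ℝ, ENNReal.ofReal |w * f (w, L)|) :=
        lintegral_mono step
    _ = (∫⁻ L : ℝ, 2 * (∫⁻ w, ENNReal.ofReal |f (w, L)|))
        + ∫⁻ L : ℝ, ENNReal.ofReal (4/(2-p)) * ⨆ w : ℝ, ENNReal.ofReal |w * f (w, L)| := by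
        apply lintegral_add_left
        exact measurable_const.mul hmeasF.lintegral_prod_right'
    _ = 2 * (∫⁻ L : ℝ, ∫⁻ w, ENNReal.ofReal |f (w, L)|)
        + ENNReal.ofReal (4/(2-p)) * ∫⁻ L : ℝ, ⨆ w : ℝ, ENNReal.ofReal |w * f (w, L)| := by
        rw [lintegral_const_mul' _ _ (by norm_num : (2:ℝ≥0∞) ≠ ⊤),
          lintegral_const_mul' _ _ ENNReal.ofReal_ne_top]
    _ = 2 * (∫⁻ q : ℝ × ℝ, ENNReal.ofReal |f q|)
        + ENNReal.ofReal (4/(2-p)) * ∫⁻ L : ℝ, ⨆ w : ℝ, ENNReal.ofReal |w * f (w, L)| := by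
        congr 1
        congr 1
        rw [Measure.volume_eq_prod]
        exact (lintegral_prod_symm (fun q : ℝ × ℝ => ENNReal.ofReal |f q|)
          ((ENNReal.measurable_ofReal.comp hf.abs).aemeasurable)).symm
end

section
/- Let r_b > 1 and let f : ℝ² → ℝ be measurable with ‖f‖_{L¹(ℝ²)} < ∞ and ∫_ℝ sup_{w∈ℝ} |w f(w,L)| dL < ∞. Define β(ν,r,L) := 2ν + L²(1/r² − 1/r_b²) and Γ(ν,r,w,L) := max(−w,0)/√(w² − β(ν,r,L)) if w² > β(ν,r,L), and Γ(ν,r,w,L) := 0 otherwise. Then sup_{ν∈ℝ} sup_{r∈[1,r_b]} ∫_ℝ ∫_ℝ Γ(ν,r,w,L) |f(w,L)| dw dL ≤ 2 ‖f‖_{L¹(ℝ²)} + 4 ∫_ℝ sup_{w∈ℝ} |w f(w,L)| dL; in particular this supremum is finite. -/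
open MeasureTheory ENNReal

lemma lintegral_image_eq_lintegral_abs_deriv_mul {s : Set ℝ} {f : ℝ → ℝ} {f' : ℝ → ℝ}
    (hs : MeasurableSet s) (hf' : ∀ x ∈ s, HasDerivWithinAt f (f' x) s x)
    (hf : Set.InjOn f s) (g : ℝ → ℝ≥0∞) :
    ∫⁻ x in f '' s, g x = ∫⁻ x in s, ENNReal.ofReal |f' x| * g (f x) := by
  simpa only [ContinuousLinearMap.det_toSpanSingleton] using
    lintegral_image_eq_lintegral_abs_det_fderiv_mul volume hs
      (fun x hx => (hf' x hx).hasFDerivWithinAt) hf g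

lemma lemC (β : ℝ) (hβ : 0 < β) :
    ∫⁻ w in Set.Ioo (-Real.sqrt (2*β)) (-Real.sqrt β),
      ENNReal.ofReal (|w| / Real.sqrt (w^2 - β)) ≤ ENNReal.ofReal (Real.sqrt β) := by
  set s : Set ℝ := Set.Ioo 0 (Real.sqrt β) with hs_def
  set φ : ℝ → ℝ := fun t => -Real.sqrt (t^2 + β) with hφ_def
  set φ' : ℝ → ℝ := fun t => -(t / Real.sqrt (t^2 + β)) with hφ'_def
  have hpos : ∀ t : ℝ, 0 < t^2 + β := fun t => by positivity
  have hderiv : ∀ t ∈ s, HasDerivWithinAt φ (φ' t) s t := by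
    intro t ht
    have h1 : HasDerivAt (fun t : ℝ => t^2 + β) (2*t) t := by
      simpa using (hasDerivAt_pow 2 t).add_const β
    have h2 := (Real.hasDerivAt_sqrt (hpos t).ne').comp t h1
    have h3 := h2.neg
    have : -(1 / (2 * Real.sqrt (t^2 + β)) * (2*t)) = φ' t := by
      have hsq : Real.sqrt (t^2+β) ≠ 0 := (Real.sqrt_pos.mpr (hpos t)).ne'
      field_simp [hφ'_def]
      simp only [hφ'_def]
      field_simp
    rw [this] at h3
    exact h3.hasDerivWithinAt
  have hinj : Set.InjOn φ s := by
    intro a ha b hb hab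
    have h1 : Real.sqrt (a^2+β) = Real.sqrt (b^2+β) := by
      have := neg_injective hab
      simpa [hφ_def] using hab
    have h2 : a^2 + β = b^2 + β := by
      rwa [Real.sqrt_inj (hpos a).le (hpos b).le] at h1
    have h3 : a^2 = b^2 := by linarith
    have h4 : |a| = |b| := by
      rw [← Real.sqrt_sq_eq_abs, ← Real.sqrt_sq_eq_abs, h3]
    rwa [abs_of_pos ha.1, abs_of_pos hb.1] at h4
  have himg : Set.Ioo (-Real.sqrt (2*β)) (-Real.sqrt β) ⊆ φ '' s := by
    rintro w ⟨h1, h2⟩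
    have hw0 : w < 0 := lt_of_lt_of_le h2 (neg_nonpos.mpr (Real.sqrt_nonneg _))
    have hsb : Real.sqrt β < -w := by linarith
    have hβw : β < w^2 := by
      have := Real.sq_sqrt hβ.le
      nlinarith [Real.sqrt_nonneg β]
    have h2b : w^2 < 2*β := by
      have h4 : -w < Real.sqrt (2*β) := by linarith
      nlinarith [Real.sq_sqrt (by linarith : (0:ℝ) ≤ 2*β), Real.sqrt_nonneg (2*β)]
    refine ⟨Real.sqrt (w^2 - β), ⟨Real.sqrt_pos.mpr (by linarith), ?_⟩, ?_⟩
    · exact (Real.sqrt_lt_sqrt (by linarith) (by linarith))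
    · have : Real.sqrt (w^2-β) ^ 2 + β = w^2 := by
        rw [Real.sq_sqrt (by linarith : (0:ℝ) ≤ w^2 - β)]; ring
      simp only [hφ_def, this]
      rw [Real.sqrt_sq_eq_abs, abs_of_neg hw0, neg_neg]
  calc ∫⁻ w in Set.Ioo (-Real.sqrt (2*β)) (-Real.sqrt β),
        ENNReal.ofReal (|w| / Real.sqrt (w^2 - β))
      ≤ ∫⁻ w in φ '' s, ENNReal.ofReal (|w| / Real.sqrt (w^2 - β)) :=
        lintegral_mono_set himg
    _ = ∫⁻ t in s, ENNReal.ofReal |φ' t|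
          * ENNReal.ofReal (|φ t| / Real.sqrt ((φ t)^2 - β)) :=
        _root_.lintegral_image_eq_lintegral_abs_deriv_mul measurableSet_Ioo hderiv hinj _
    _ = ∫⁻ _ in s, 1 := by
        refine setLIntegral_congr_fun measurableSet_Ioo ?_
        intro t ht
        have ht0 : 0 < t := ht.1
        have hsq : 0 < Real.sqrt (t^2 + β) := Real.sqrt_pos.mpr (hpos t)
        have h1 : (φ t)^2 - β = t^2 := by
          simp only [hφ_def]
          rw [neg_pow]
          simp [Real.sq_sqrt (hpos t).le]
        have h2 : |φ t| = Real.sqrt (t^2+β) := by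
          simp [hφ_def, abs_of_nonpos (neg_nonpos.mpr (Real.sqrt_nonneg _))]
        have h3 : |φ' t| = t / Real.sqrt (t^2+β) := by
          simp [hφ'_def, abs_of_nonneg (div_nonneg ht0.le hsq.le)]
        beta_reduce
        rw [h1, h2, h3, Real.sqrt_sq ht0.le,
          ← ENNReal.ofReal_mul (div_nonneg ht0.le hsq.le)]
        rw [div_mul_div_comm, mul_comm]
        rw [div_self (by positivity)]
        simp
    _ = volume s := by simp [setLIntegral_one]
    _ ≤ ENNReal.ofReal (Real.sqrt β) := by
        simp [hs_def, Real.volume_Ioo]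

lemma lemB (β : ℝ) :
    ∫⁻ w in Set.Ioo (-Real.sqrt (2*β)) (-Real.sqrt β),
      ENNReal.ofReal ((Real.sqrt (w^2 - β))⁻¹) ≤ 1 := by
  rcases le_or_gt β 0 with hβ | hβ
  · have h1 : Real.sqrt (2*β) = 0 := Real.sqrt_eq_zero_of_nonpos (by linarith)
    have h2 : Real.sqrt β = 0 := Real.sqrt_eq_zero_of_nonpos hβ
    simp [h1, h2]
  · have hsb : 0 < Real.sqrt β := Real.sqrt_pos.mpr hβ
    calc ∫⁻ w in Set.Ioo (-Real.sqrt (2*β)) (-Real.sqrt β),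
          ENNReal.ofReal ((Real.sqrt (w^2 - β))⁻¹)
        ≤ ∫⁻ w in Set.Ioo (-Real.sqrt (2*β)) (-Real.sqrt β),
          ENNReal.ofReal ((Real.sqrt β)⁻¹) * ENNReal.ofReal (|w| / Real.sqrt (w^2 - β)) := by
          refine setLIntegral_mono' measurableSet_Ioo ?_
          intro w hw
          have hw0 : w < 0 := lt_of_lt_of_le hw.2 (neg_nonpos.mpr (Real.sqrt_nonneg _))
          have hwb : Real.sqrt β < |w| := by
            rw [abs_of_neg hw0]; linarith [hw.2]
          have hwβ : β < w^2 := by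
            nlinarith [Real.sq_sqrt hβ.le, abs_nonneg w, sq_abs w]
          have hden : 0 < Real.sqrt (w^2 - β) := Real.sqrt_pos.mpr (by linarith)
          rw [← ENNReal.ofReal_mul (by positivity)]
          apply ENNReal.ofReal_le_ofReal
          have h1 : (1:ℝ) ≤ (Real.sqrt β)⁻¹ * |w| := by
            rw [← inv_mul_cancel₀ hsb.ne']
            exact mul_le_mul_of_nonneg_left hwb.le (by positivity)
          calc (Real.sqrt (w^2-β))⁻¹ = 1 * (Real.sqrt (w^2-β))⁻¹ := (one_mul _).symm
            _ ≤ ((Real.sqrt β)⁻¹ * |w|) * (Real.sqrt (w^2-β))⁻¹ :=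
                mul_le_mul_of_nonneg_right h1 (by positivity)
            _ = (Real.sqrt β)⁻¹ * (|w| / Real.sqrt (w^2-β)) := by
                rw [div_eq_mul_inv]; ring
        _ = ENNReal.ofReal ((Real.sqrt β)⁻¹) *
            ∫⁻ w in Set.Ioo (-Real.sqrt (2*β)) (-Real.sqrt β),
              ENNReal.ofReal (|w| / Real.sqrt (w^2 - β)) :=
          lintegral_const_mul' _ _ ENNReal.ofReal_ne_top
        _ ≤ ENNReal.ofReal ((Real.sqrt β)⁻¹) * ENNReal.ofReal (Real.sqrt β) :=
          mul_le_mul_right (lemC β hβ) _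
        _ ≤ 1 := by
          rw [← ENNReal.ofReal_mul (by positivity), inv_mul_cancel₀ hsb.ne']
          simp

noncomputable def betaFn (rb ν r L : ℝ) : ℝ := 2 * ν + L ^ 2 * (1 / r ^ 2 - 1 / rb ^ 2)

noncomputable def GammaFn (rb ν r w L : ℝ) : ℝ :=
  if w ^ 2 > betaFn rb ν r L then max (-w) 0 / Real.sqrt (w ^ 2 - betaFn rb ν r L) else 0

lemma gamma_nonneg (rb ν r w L : ℝ) : 0 ≤ GammaFn rb ν r w L := by
  rw [GammaFn]
  split_ifs with hc
  · positivity
  · exact le_refl 0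

lemma gamma_le_two {rb ν r w L : ℝ}
    (hw : w ∉ Set.Ioo (-Real.sqrt (2 * betaFn rb ν r L)) (-Real.sqrt (betaFn rb ν r L))) :
    GammaFn rb ν r w L ≤ 2 := by
  rw [GammaFn]
  split_ifs with hc
  · rcases le_or_gt (-w) 0 with hw0 | hw0
    · rw [max_eq_right hw0, zero_div]; norm_num
    · rw [max_eq_left hw0.le]
      have hwneg : w < 0 := by linarith
      rw [Set.mem_Ioo, not_and_or, not_lt, not_lt] at hw
      set β := betaFn rb ν r L with hβ_def
      rcases hw with h1 | h2
      · rcases le_or_gt β 0 with hβ | hβ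
        · have hle : Real.sqrt (w^2) ≤ Real.sqrt (w^2 - β) := Real.sqrt_le_sqrt (by linarith)
          rw [Real.sqrt_sq_eq_abs, abs_of_neg hwneg] at hle
          have hd : 0 < Real.sqrt (w^2-β) := lt_of_lt_of_le hw0 hle
          rw [div_le_iff₀ hd]; linarith
        · have h2b : 2*β ≤ w^2 := by
            have hs2 := Real.sq_sqrt (by linarith : (0:ℝ) ≤ 2*β)
            nlinarith [Real.sqrt_nonneg (2*β)]
          have hq : (w/2)^2 ≤ w^2 - β := by nlinarith
          have hle : Real.sqrt ((w/2)^2) ≤ Real.sqrt (w^2-β) := Real.sqrt_le_sqrt hq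
          rw [Real.sqrt_sq_eq_abs, abs_of_neg (by linarith : w/2 < 0)] at hle
          have hd : 0 < Real.sqrt (w^2-β) := lt_of_lt_of_le (by linarith) hle
          rw [div_le_iff₀ hd]; linarith
      · exfalso
        have h3 : -w ≤ Real.sqrt β := by linarith
        rcases le_or_gt β 0 with hβ | hβ
        · rw [Real.sqrt_eq_zero_of_nonpos hβ] at h3; linarith
        · have : w^2 ≤ β := by nlinarith [Real.sq_sqrt hβ.le, Real.sqrt_nonneg β]
          linarith
  · norm_num

lemma inner_bound (rb ν r L : ℝ) (f : ℝ × ℝ → ℝ) (hf : Measurable f)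
    (lemB : ∀ β : ℝ, ∫⁻ w in Set.Ioo (-Real.sqrt (2*β)) (-Real.sqrt β),
      ENNReal.ofReal ((Real.sqrt (w^2 - β))⁻¹) ≤ 1) :
    ∫⁻ w, ENNReal.ofReal (GammaFn rb ν r w L * |f (w, L)|)
      ≤ 2 * (∫⁻ w, ENNReal.ofReal |f (w, L)|) + ⨆ w : ℝ, ENNReal.ofReal |w * f (w, L)| := by
  set β := betaFn rb ν r L with hβ_def
  set E := Set.Ioo (-Real.sqrt (2*β)) (-Real.sqrt β) with hE_def
  set S := ⨆ w : ℝ, ENNReal.ofReal |w * f (w, L)| with hS_def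
  have m1 : Measurable fun w : ℝ => ENNReal.ofReal |f (w, L)| := by
    exact ((hf.comp (measurable_id.prodMk measurable_const)).abs).ennreal_ofReal
  have m2 : Measurable fun w : ℝ => ENNReal.ofReal ((Real.sqrt (w^2 - β))⁻¹) := by
    exact ((Real.continuous_sqrt.measurable.comp
      ((measurable_id.pow_const 2).sub_const β)).inv).ennreal_ofReal
  have key : ∀ w, ENNReal.ofReal (GammaFn rb ν r w L * |f (w, L)|)
      ≤ 2 * ENNReal.ofReal |f (w, L)|
        + E.indicator (fun w => S * ENNReal.ofReal ((Real.sqrt (w^2 - β))⁻¹)) w := by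
    intro w
    by_cases hw : w ∈ E
    · rw [Set.indicator_of_mem hw]
      obtain ⟨h1, h2⟩ := hw
      have hw0 : w < 0 := lt_of_lt_of_le h2 (neg_nonpos.mpr (Real.sqrt_nonneg _))
      have hβpos : 0 < β := by
        by_contra h
        push_neg at h
        rw [Real.sqrt_eq_zero_of_nonpos (by linarith : 2*β ≤ 0)] at h1
        simp at h1
        linarith
      have hwβ : β < w^2 := by
        have hsb : Real.sqrt β < -w := by linarith
        nlinarith [Real.sq_sqrt hβpos.le, Real.sqrt_nonneg β]
      have hΓ : GammaFn rb ν r w L = -w / Real.sqrt (w^2 - β) := by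
        rw [GammaFn, if_pos hwβ, max_eq_left (by linarith)]
      have heq : GammaFn rb ν r w L * |f (w, L)| = |w * f (w, L)| * (Real.sqrt (w^2-β))⁻¹ := by
        rw [hΓ, abs_mul, abs_of_neg hw0, div_eq_mul_inv]; ring
      rw [heq, ENNReal.ofReal_mul (abs_nonneg _)]
      refine le_trans (mul_le_mul_left
        (le_iSup (fun w => ENNReal.ofReal |w * f (w, L)|) w) _) ?_
      exact self_le_add_left _ _
    · rw [Set.indicator_of_notMem hw, add_zero]
      calc ENNReal.ofReal (GammaFn rb ν r w L * |f (w, L)|)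
          ≤ ENNReal.ofReal (2 * |f (w, L)|) :=
            ENNReal.ofReal_le_ofReal
              (mul_le_mul_of_nonneg_right (gamma_le_two hw) (abs_nonneg _))
        _ = 2 * ENNReal.ofReal |f (w, L)| := by
            rw [ENNReal.ofReal_mul (by norm_num)]
            norm_num
  calc ∫⁻ w, ENNReal.ofReal (GammaFn rb ν r w L * |f (w, L)|)
      ≤ ∫⁻ w, (2 * ENNReal.ofReal |f (w, L)|
          + E.indicator (fun w => S * ENNReal.ofReal ((Real.sqrt (w^2 - β))⁻¹)) w) :=
        lintegral_mono key
    _ = 2 * (∫⁻ w, ENNReal.ofReal |f (w, L)|)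
        + ∫⁻ w, E.indicator (fun w => S * ENNReal.ofReal ((Real.sqrt (w^2 - β))⁻¹)) w := by
        rw [lintegral_add_left (m1.const_mul 2), lintegral_const_mul 2 m1]
    _ ≤ 2 * (∫⁻ w, ENNReal.ofReal |f (w, L)|) + S := by
        gcongr
        rw [lintegral_indicator measurableSet_Ioo, lintegral_const_mul S m2]
        calc S * ∫⁻ w in E, ENNReal.ofReal ((Real.sqrt (w^2 - β))⁻¹)
            ≤ S * 1 := mul_le_mul_right (lemB β) S
          _ = S := mul_one S


/-- **Uniform bound for the kernel `Γ`:** if `f : ℝ² → ℝ` is measurable with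
`‖f‖_{L¹} < ∞` and `∫ sup_w |w f(w,L)| dL < ∞`, then
`sup_{ν∈ℝ} sup_{r∈[1,r_b]} ∫∫ Γ(ν,r,w,L) |f(w,L)| dw dL
  ≤ 2‖f‖_{L¹} + 4 ∫ sup_w |w f(w,L)| dL`, and in particular that supremum is finite. -/
theorem gamma_uniform_bound (rb : ℝ) (hrb : 1 < rb)
    (f : ℝ × ℝ → ℝ) (hf : Measurable f)
    (hL1 : (∫⁻ q : ℝ × ℝ, ENNReal.ofReal |f q|) ≠ ⊤)
    (hN2 : (∫⁻ L : ℝ, ⨆ w : ℝ, ENNReal.ofReal |w * f (w, L)|) ≠ ⊤) :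
    ((⨆ ν : ℝ, ⨆ r ∈ Set.Icc (1 : ℝ) rb,
        ∫⁻ L : ℝ, ∫⁻ w : ℝ, ENNReal.ofReal (GammaFn rb ν r w L * |f (w, L)|))
      ≤ 2 * (∫⁻ q : ℝ × ℝ, ENNReal.ofReal |f q|)
        + 4 * ∫⁻ L : ℝ, ⨆ w : ℝ, ENNReal.ofReal |w * f (w, L)|) ∧
    (⨆ ν : ℝ, ⨆ r ∈ Set.Icc (1 : ℝ) rb,
        ∫⁻ L : ℝ, ∫⁻ w : ℝ, ENNReal.ofReal (GammaFn rb ν r w L * |f (w, L)|)) < ⊤ := by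
  set I := ∫⁻ q : ℝ × ℝ, ENNReal.ofReal |f q| with hI_def
  set J := ∫⁻ L : ℝ, ⨆ w : ℝ, ENNReal.ofReal |w * f (w, L)| with hJ_def
  have hmeas : Measurable fun q : ℝ × ℝ => ENNReal.ofReal |f q| := hf.abs.ennreal_ofReal
  have hmeasL : Measurable fun L : ℝ => ∫⁻ w, ENNReal.ofReal |f (w, L)| :=
    hmeas.lintegral_prod_left'
  have hIiter : ∫⁻ L : ℝ, ∫⁻ w : ℝ, ENNReal.ofReal |f (w, L)| = I := by
    rw [hI_def, Measure.volume_eq_prod, lintegral_prod_symm' _ hmeas]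
  have hbound : ∀ ν : ℝ, ∀ r : ℝ, r ∈ Set.Icc (1 : ℝ) rb →
      (∫⁻ L : ℝ, ∫⁻ w : ℝ, ENNReal.ofReal (GammaFn rb ν r w L * |f (w, L)|))
        ≤ 2 * I + 4 * J := by
    intro ν r _
    calc ∫⁻ L : ℝ, ∫⁻ w : ℝ, ENNReal.ofReal (GammaFn rb ν r w L * |f (w, L)|)
        ≤ ∫⁻ L : ℝ, (2 * (∫⁻ w, ENNReal.ofReal |f (w, L)|)
            + ⨆ w : ℝ, ENNReal.ofReal |w * f (w, L)|) :=
          lintegral_mono fun L => inner_bound rb ν r L f hf lemB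
      _ = 2 * (∫⁻ L : ℝ, ∫⁻ w, ENNReal.ofReal |f (w, L)|) + J := by
          rw [lintegral_add_left (hmeasL.const_mul 2),
            lintegral_const_mul 2 hmeasL]
      _ = 2 * I + J := by rw [hIiter]
      _ ≤ 2 * I + 4 * J :=
          add_le_add_right (le_mul_of_one_le_left zero_le (by norm_num)) _
  have hsup : (⨆ ν : ℝ, ⨆ r ∈ Set.Icc (1 : ℝ) rb,
      ∫⁻ L : ℝ, ∫⁻ w : ℝ, ENNReal.ofReal (GammaFn rb ν r w L * |f (w, L)|))
        ≤ 2 * I + 4 * J :=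
    iSup_le fun ν => iSup_le fun r => iSup_le fun hr => hbound ν r hr
  refine ⟨hsup, lt_of_le_of_lt hsup ?_⟩
  rw [lt_top_iff_ne_top]
  exact ENNReal.add_ne_top.mpr
    ⟨ENNReal.mul_ne_top (by norm_num) hL1, ENNReal.mul_ne_top (by norm_num) hN2⟩
end

section
/- Let r_b > 1 and let (φ_n) be a sequence of continuous functions on [1,r_b] converging uniformly to a continuous function φ. Define, for a continuous function ψ on [1,r_b], ρ̃[ψ](e) := inf{ a ∈ [1,r_b] : ψ(s) ≤ e for all s ∈ [a,r_b] }. Then for almost every e ∈ ℝ (with respect to Lebesgue measure), ρ̃[φ_n](e) → ρ̃[φ](e) as n → ∞. -/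
/-- `ρ̃[ψ](e) := inf { a ∈ [1, r_b] : ψ(s) ≤ e for all s ∈ [a, r_b] }`. -/
noncomputable def rhoTilde (rb : ℝ) (ψ : ℝ → ℝ) (e : ℝ) : ℝ :=
  sInf {a | a ∈ Set.Icc 1 rb ∧ ∀ s ∈ Set.Icc a rb, ψ s ≤ e}

namespace RhoAux

variable (rb : ℝ)

def S (ψ : ℝ → ℝ) (e : ℝ) : Set ℝ :=
  {a | a ∈ Set.Icc 1 rb ∧ ∀ s ∈ Set.Icc a rb, ψ s ≤ e}

lemma bddBelow_S (ψ : ℝ → ℝ) (e : ℝ) : BddBelow (S rb ψ e) :=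
  ⟨1, fun a ha => ha.1.1⟩

lemma mem_S_rb (hrb : 1 < rb) {ψ : ℝ → ℝ} {e : ℝ} (h : ψ rb ≤ e) : rb ∈ S rb ψ e := by
  refine ⟨⟨hrb.le, le_refl _⟩, fun s hs => ?_⟩
  have : s = rb := le_antisymm hs.2 hs.1
  simpa [this] using h

lemma S_nonempty_imp {ψ : ℝ → ℝ} {e : ℝ} (h : (S rb ψ e).Nonempty) : ψ rb ≤ e := by
  obtain ⟨a, ha⟩ := h
  exact ha.2 rb ⟨ha.1.2, le_refl _⟩

lemma S_subset_comp {ψ χ : ℝ → ℝ} {e δ : ℝ}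
    (h : ∀ s ∈ Set.Icc 1 rb, ψ s ≤ χ s + δ) : S rb χ (e - δ) ⊆ S rb ψ e := by
  intro a ha
  refine ⟨ha.1, fun s hs => ?_⟩
  have hs1 : s ∈ Set.Icc (1:ℝ) rb := ⟨le_trans ha.1.1 hs.1, hs.2⟩
  have := ha.2 s hs
  linarith [h s hs1]

/-- `F e = sInf (insert rb (S φ e))`, antitone extension of `rhoTilde`. -/
noncomputable def F (φ : ℝ → ℝ) (e : ℝ) : ℝ := sInf (insert rb (S rb φ e))

lemma bddBelow_insert (hrb : 1 < rb) (φ : ℝ → ℝ) (e : ℝ) :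
    BddBelow (insert rb (S rb φ e)) := by
  refine ⟨1, fun a ha => ?_⟩
  rcases ha with h | h
  · simp [h, hrb.le]
  · exact h.1.1

lemma antitone_F (hrb : 1 < rb) (φ : ℝ → ℝ) : Antitone (F rb φ) := by
  intro e e' hee'
  apply csInf_le_csInf (bddBelow_insert rb hrb φ e') ⟨rb, Set.mem_insert _ _⟩
  apply Set.insert_subset_insert
  intro a ha
  exact ⟨ha.1, fun s hs => le_trans (ha.2 s hs) hee'⟩

lemma F_eq_rhoTilde (hrb : 1 < rb) {φ : ℝ → ℝ} {e : ℝ} (h : φ rb ≤ e) :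
    F rb φ e = rhoTilde rb φ e := by
  unfold F rhoTilde
  rw [Set.insert_eq_self.2 (mem_S_rb rb hrb h)]
  rfl

end RhoAux

/-- **Convergence property for `ρ̃`:** if continuous functions `φ_n` converge uniformly on
`[1, r_b]` to a continuous `φ`, then `ρ̃[φ_n](e) → ρ̃[φ](e)` for almost every `e ∈ ℝ`. -/
theorem rhoTilde_tendsto (rb : ℝ) (hrb : 1 < rb) (φn : ℕ → ℝ → ℝ) (φ : ℝ → ℝ)
    (hcont : ∀ n, ContinuousOn (φn n) (Set.Icc 1 rb))
    (hφ : ContinuousOn φ (Set.Icc 1 rb))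
    (hconv : TendstoUniformlyOn φn φ Filter.atTop (Set.Icc 1 rb)) :
    ∀ᵐ e : ℝ ∂MeasureTheory.volume,
      Filter.Tendsto (fun n => rhoTilde rb (φn n) e) Filter.atTop
        (nhds (rhoTilde rb φ e)) := by
  classical
  open RhoAux in
  have hconv' := (Metric.tendstoUniformlyOn_iff).1 hconv
  set B : Set ℝ := {φ rb} ∪ {e | ¬ContinuousAt (F rb φ) e} with hB
  have hBnull : MeasureTheory.volume B = 0 := by
    apply MeasureTheory.measure_union_null (MeasureTheory.measure_singleton _)
    exact Set.Countable.measure_zero ((antitone_F rb hrb φ).countable_not_continuousAt) _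
  rw [MeasureTheory.ae_iff]
  apply MeasureTheory.measure_mono_null _ hBnull
  intro e he
  simp only [Set.mem_setOf_eq] at he
  by_contra heB
  apply he
  simp only [hB, Set.mem_union, Set.mem_singleton_iff, Set.mem_setOf_eq, not_or] at heB
  obtain ⟨hne, hFcont'⟩ := heB
  have hFcont := not_not.1 hFcont'
  rcases lt_or_gt_of_ne hne with hlt | hgt
  · -- e < φ rb : eventually everything is 0
    have hgzero : rhoTilde rb φ e = 0 := by
      have : S rb φ e = ∅ := by
        rw [Set.eq_empty_iff_forall_notMem]
        intro a ha
        exact absurd (S_nonempty_imp rb ⟨a, ha⟩) (not_le.2 hlt)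
      show sInf (S rb φ e) = 0
      rw [this, Real.sInf_empty]
    rw [hgzero]
    have hev : ∀ᶠ n in Filter.atTop, rhoTilde rb (φn n) e = 0 := by
      filter_upwards [hconv' (φ rb - e) (by linarith)] with n hn
      have hrbmem : rb ∈ Set.Icc (1:ℝ) rb := ⟨hrb.le, le_refl _⟩
      have := hn rb hrbmem
      rw [Real.dist_eq] at this
      have hφn : e < φn n rb := by
        cases abs_lt.1 this with
        | intro h1 h2 => linarith
      have : S rb (φn n) e = ∅ := by
        rw [Set.eq_empty_iff_forall_notMem]
        intro a ha
        exact absurd (S_nonempty_imp rb ⟨a, ha⟩) (not_le.2 hφn)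
      show sInf (S rb (φn n) e) = 0
      rw [this, Real.sInf_empty]
    exact Filter.Tendsto.congr' (hev.mono fun n h => h.symm) tendsto_const_nhds
  · -- e > φ rb : squeeze
    rw [Metric.tendsto_atTop]
    intro ε hε
    obtain ⟨δ0, hδ0, hδ0c⟩ := Metric.continuousAt_iff.1 hFcont ε hε
    set δ : ℝ := min (δ0 / 2) ((e - φ rb) / 2) with hδdef
    have hδpos : 0 < δ := lt_min (by linarith) (by linarith)
    have hδlt : δ < δ0 := lt_of_le_of_lt (min_le_left _ _) (by linarith)
    have hδe : φ rb ≤ e - δ := by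
      have := min_le_right (δ0 / 2) ((e - φ rb) / 2)
      simp only [← hδdef] at this
      linarith
    obtain ⟨N, hN⟩ := Filter.eventually_atTop.1 (hconv' δ hδpos)
    refine ⟨N, fun n hn => ?_⟩
    have hclose := hN n hn
    have hup : ∀ s ∈ Set.Icc 1 rb, φn n s ≤ φ s + δ := fun s hs => by
      have := hclose s hs; rw [Real.dist_eq] at this
      cases abs_lt.1 this with | intro h1 h2 => linarith
    have hdown : ∀ s ∈ Set.Icc 1 rb, φ s ≤ φn n s + δ := fun s hs => by
      have := hclose s hs; rw [Real.dist_eq] at this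
      cases abs_lt.1 this with | intro h1 h2 => linarith
    -- gn e ≤ F (e - δ)
    have h1 : rhoTilde rb (φn n) e ≤ F rb φ (e - δ) := by
      have hsub : S rb φ (e - δ) ⊆ S rb (φn n) e := S_subset_comp rb hup
      have hne' : (S rb φ (e - δ)).Nonempty := ⟨rb, mem_S_rb rb hrb hδe⟩
      rw [F_eq_rhoTilde rb hrb hδe]
      exact csInf_le_csInf (bddBelow_S rb _ _) hne' hsub
    -- F (e + δ) ≤ gn e
    have h2 : F rb φ (e + δ) ≤ rhoTilde rb (φn n) e := by
      have hφne : φn n rb ≤ e := by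
        have := hup rb ⟨hrb.le, le_refl _⟩
        linarith
      have hsub : S rb (φn n) e ⊆ S rb φ (e + δ) := by
        have := S_subset_comp rb (ψ := φ) (χ := φn n) (e := e + δ) (δ := δ) hdown
        simpa using this
      have hne' : (S rb (φn n) e).Nonempty := ⟨rb, mem_S_rb rb hrb hφne⟩
      rw [F_eq_rhoTilde rb hrb (by linarith : φ rb ≤ e + δ)]
      exact csInf_le_csInf (bddBelow_S rb _ _) hne' hsub
    have hFe : F rb φ e = rhoTilde rb φ e := F_eq_rhoTilde rb hrb hgt.le
    have hc1 : dist (F rb φ (e - δ)) (F rb φ e) < ε := by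
      apply hδ0c
      rw [Real.dist_eq]
      rw [abs_of_nonpos (by linarith)]
      linarith
    have hc2 : dist (F rb φ (e + δ)) (F rb φ e) < ε := by
      apply hδ0c
      rw [Real.dist_eq]
      rw [abs_of_nonneg (by linarith)]
      linarith
    rw [Real.dist_eq] at hc1 hc2 ⊢
    rw [← hFe]
    cases abs_lt.1 hc1 with | intro a1 a2 =>
    cases abs_lt.1 hc2 with | intro b1 b2 =>
    rw [abs_lt]
    constructor <;> linarith
end

section
/- Let r_b > 1 and let (φ_n) be a sequence of continuous functions on [1,r_b] converging uniformly to a continuous function φ. Define ρ̃[ψ](e) := inf{ a ∈ [1,r_b] : ψ(s) ≤ e for all s ∈ [a,r_b] } for continuous ψ on [1,r_b]. Then for almost every (w,L) ∈ ℝ² (with respect to the Lebesgue measure on ℝ²), ρ̃[ φ_n + L²/(2(·)²) ]( w²/2 + L²/(2 r_b²) ) → ρ̃[ φ + L²/(2(·)²) ]( w²/2 + L²/(2 r_b²) ) as n → ∞, where φ_n + L²/(2(·)²) denotes the function r ↦ φ_n(r) + L²/(2r²) on [1,r_b]. -/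
open Set Filter MeasureTheory Topology

namespace RhoAux

/-- The defining set of `rhoTilde`. -/
def A (rb : ℝ) (ψ : ℝ → ℝ) (e : ℝ) : Set ℝ :=
  {a | a ∈ Set.Icc 1 rb ∧ ∀ s ∈ Set.Icc a rb, ψ s ≤ e}

lemma rhoTilde_eq (rb : ℝ) (ψ : ℝ → ℝ) (e : ℝ) : rhoTilde rb ψ e = sInf (A rb ψ e) := rfl

lemma bddBelow_A (rb : ℝ) (ψ : ℝ → ℝ) (e : ℝ) : BddBelow (A rb ψ e) :=
  ⟨1, fun _ ha => ha.1.1⟩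

lemma rb_mem_A {rb : ℝ} (hrb : 1 ≤ rb) {ψ : ℝ → ℝ} {e : ℝ} (h : ψ rb ≤ e) :
    rb ∈ A rb ψ e := by
  refine ⟨⟨hrb, le_refl rb⟩, fun s hs => ?_⟩
  have : s = rb := le_antisymm hs.2 hs.1
  rwa [this]

lemma A_nonempty {rb : ℝ} (hrb : 1 ≤ rb) {ψ : ℝ → ℝ} {e : ℝ} (h : ψ rb ≤ e) :
    (A rb ψ e).Nonempty := ⟨rb, rb_mem_A hrb h⟩

lemma A_eq_empty {rb : ℝ} {ψ : ℝ → ℝ} {e : ℝ} (h : e < ψ rb) : A rb ψ e = ∅ := by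
  ext a
  simp only [A, mem_setOf_eq, mem_empty_iff_false, iff_false, not_and]
  intro ha h2
  exact absurd (h2 rb ⟨ha.2, le_rfl⟩) (not_le.2 h)

lemma A_le_A {rb : ℝ} {ψ ψ' : ℝ → ℝ} {e e' : ℝ}
    (h : ∀ s ∈ Icc (1:ℝ) rb, ψ s ≤ e → ψ' s ≤ e') : A rb ψ e ⊆ A rb ψ' e' := by
  rintro a ⟨ha, h2⟩
  exact ⟨ha, fun s hs => h s ⟨le_trans ha.1 hs.1, hs.2⟩ (h2 s hs)⟩

/-- Basic bounds for `rhoTilde`. -/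
lemma rhoTilde_nonneg {rb : ℝ} (ψ : ℝ → ℝ) (e : ℝ) : 0 ≤ rhoTilde rb ψ e := by
  rcases eq_empty_or_nonempty (A rb ψ e) with h | h
  · rw [rhoTilde_eq, h, Real.sInf_empty]
  · rw [rhoTilde_eq]
    exact le_trans zero_le_one (le_csInf h fun a ha => ha.1.1)

lemma one_le_rhoTilde {rb : ℝ} (hrb : 1 ≤ rb) (ψ : ℝ → ℝ) {e : ℝ} (h : ψ rb ≤ e) :
    1 ≤ rhoTilde rb ψ e := by
  rw [rhoTilde_eq]
  exact le_csInf (A_nonempty hrb h) fun a ha => ha.1.1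

lemma rhoTilde_le_rb {rb : ℝ} (hrb : 1 ≤ rb) (ψ : ℝ → ℝ) (e : ℝ) :
    rhoTilde rb ψ e ≤ rb := by
  rcases le_or_gt (ψ rb) e with h | h
  · rw [rhoTilde_eq]
    exact csInf_le (bddBelow_A _ _ _) (rb_mem_A hrb h)
  · rw [rhoTilde_eq, A_eq_empty h, Real.sInf_empty]
    linarith

lemma rhoTilde_eq_zero {rb : ℝ} (ψ : ℝ → ℝ) {e : ℝ} (h : e < ψ rb) :
    rhoTilde rb ψ e = 0 := by
  rw [rhoTilde_eq, A_eq_empty h, Real.sInf_empty]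

/-- The value of `rhoTilde` after clamping the energy above `ψ rb`; this is an antitone
function of the energy. -/
noncomputable def gbar (rb : ℝ) (ψ : ℝ → ℝ) (e : ℝ) : ℝ :=
  rhoTilde rb ψ (max e (ψ rb))

lemma gbar_antitone {rb : ℝ} (hrb : 1 ≤ rb) (ψ : ℝ → ℝ) : Antitone (gbar rb ψ) := by
  intro e1 e2 h
  exact csInf_le_csInf (bddBelow_A _ _ _)
    (A_nonempty hrb (le_max_right _ _))
    (A_le_A fun s _ hs => hs.trans (max_le_max h le_rfl))

lemma gbar_eq {rb : ℝ} {ψ : ℝ → ℝ} {e : ℝ} (h : ψ rb ≤ e) :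
    gbar rb ψ e = rhoTilde rb ψ e := by
  unfold gbar
  rw [max_eq_left h]

/-- Pointwise convergence of the barrier positions, at a "good" pair `(w, L)`. -/
lemma key {rb : ℝ} (hrb : 1 < rb)
    {φn : ℕ → ℝ → ℝ} {φ : ℝ → ℝ}
    (hconv : TendstoUniformlyOn φn φ Filter.atTop (Set.Icc 1 rb))
    (w L : ℝ)
    (hne : w ^ 2 / 2 ≠ φ rb)
    (hcg : ContinuousAt (gbar rb (fun r => φ r + L ^ 2 / (2 * r ^ 2)))
      (w ^ 2 / 2 + L ^ 2 / (2 * rb ^ 2))) :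
    Filter.Tendsto
      (fun n => rhoTilde rb (fun r => φn n r + L ^ 2 / (2 * r ^ 2))
        (w ^ 2 / 2 + L ^ 2 / (2 * rb ^ 2)))
      Filter.atTop
      (nhds (rhoTilde rb (fun r => φ r + L ^ 2 / (2 * r ^ 2))
        (w ^ 2 / 2 + L ^ 2 / (2 * rb ^ 2)))) := by
  set ψ : ℝ → ℝ := fun r => φ r + L ^ 2 / (2 * r ^ 2) with hψ
  set e : ℝ := w ^ 2 / 2 + L ^ 2 / (2 * rb ^ 2) with he
  have hψrb : ψ rb = φ rb + L ^ 2 / (2 * rb ^ 2) := rfl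
  clear_value ψ e
  rcases lt_or_gt_of_ne hne with hlt | hgt
  · -- `φ rb > w²/2` : the sets are eventually empty and everything is `0`.
    have hE : e < ψ rb := by rw [hψrb, he]; linarith
    have hF0 : rhoTilde rb ψ e = 0 := rhoTilde_eq_zero ψ hE
    rw [hF0]
    have hev : ∀ᶠ n in atTop, ∀ x ∈ Icc (1:ℝ) rb, dist (φ x) (φn n x) < φ rb - w ^ 2 / 2 :=
      Metric.tendstoUniformlyOn_iff.1 hconv _ (by linarith)
    refine Tendsto.congr' ?_ tendsto_const_nhds
    filter_upwards [hev] with n hn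
    have hrbmem : rb ∈ Icc (1:ℝ) rb := ⟨hrb.le, le_rfl⟩
    have h1 := hn rb hrbmem
    rw [Real.dist_eq, abs_sub_lt_iff] at h1
    have hE' : e < (fun r => φn n r + L ^ 2 / (2 * r ^ 2)) rb := by
      show e < φn n rb + L ^ 2 / (2 * rb ^ 2)
      rw [he]; linarith [h1.1]
    exact (rhoTilde_eq_zero (fun r => φn n r + L ^ 2 / (2 * r ^ 2)) hE').symm
  · -- `φ rb < w²/2` : use continuity of `gbar` at `e` together with uniform convergence.
    have hErb : ψ rb < e := by rw [hψrb, he]; linarith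
    rw [Metric.tendsto_nhds]
    intro ε hε
    rw [Metric.continuousAt_iff] at hcg
    obtain ⟨δ0, hδ0, hδ0'⟩ := hcg ε hε
    obtain ⟨δ, hδpos, hδ1, hδ2⟩ : ∃ δ : ℝ, 0 < δ ∧ δ < δ0 ∧ ψ rb < e - δ := by
      refine ⟨min (δ0 / 2) ((e - ψ rb) / 2), lt_min (by linarith) (by linarith),
        lt_of_le_of_lt (min_le_left _ _) (by linarith), ?_⟩
      have h := min_le_right (δ0 / 2) ((e - ψ rb) / 2)
      linarith
    have hclose : ∀ x : ℝ, dist x e = δ → dist (gbar rb ψ x) (gbar rb ψ e) < ε := by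
      intro x hx
      exact hδ0' (by rw [hx]; exact hδ1)
    have hgm : gbar rb ψ (e - δ) = rhoTilde rb ψ (e - δ) := gbar_eq (by linarith)
    have hgp : gbar rb ψ (e + δ) = rhoTilde rb ψ (e + δ) := gbar_eq (by linarith)
    have hge : gbar rb ψ e = rhoTilde rb ψ e := gbar_eq hErb.le
    have hev : ∀ᶠ n in atTop, ∀ x ∈ Icc (1:ℝ) rb, dist (φ x) (φn n x) < δ :=
      Metric.tendstoUniformlyOn_iff.1 hconv _ hδpos
    filter_upwards [hev] with n hn
    set ψn : ℝ → ℝ := fun r => φn n r + L ^ 2 / (2 * r ^ 2) with hψn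
    have hbound : ∀ s ∈ Icc (1:ℝ) rb, |ψ s - ψn s| < δ := by
      intro s hs
      have h := hn s hs
      rw [Real.dist_eq] at h
      have heq : ψ s - ψn s = φ s - φn n s := by rw [hψ, hψn]; ring
      rwa [heq]
    -- upper bound : `Fn ≤ g (e - δ)`
    have hub : rhoTilde rb ψn e ≤ rhoTilde rb ψ (e - δ) := by
      rw [rhoTilde_eq, rhoTilde_eq]
      refine csInf_le_csInf (bddBelow_A _ _ _) (A_nonempty hrb.le (by linarith)) ?_
      refine A_le_A fun s hs hψs => ?_
      have h := hbound s hs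
      rw [abs_sub_lt_iff] at h
      linarith [h.2]
    -- lower bound : `g (e + δ) ≤ Fn`
    have hψnrb : ψn rb ≤ e := by
      have h := hbound rb ⟨hrb.le, le_rfl⟩
      rw [abs_sub_lt_iff] at h
      linarith [h.1, hδ2]
    have hlb : rhoTilde rb ψ (e + δ) ≤ rhoTilde rb ψn e := by
      rw [rhoTilde_eq, rhoTilde_eq]
      refine csInf_le_csInf (bddBelow_A _ _ _) (A_nonempty hrb.le hψnrb) ?_
      refine A_le_A fun s hs hψs => ?_
      have h := hbound s hs
      rw [abs_sub_lt_iff] at h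
      linarith [h.1]
    have h1 : dist (gbar rb ψ (e - δ)) (gbar rb ψ e) < ε :=
      hclose _ (by rw [Real.dist_eq, show e - δ - e = -δ by ring, abs_neg,
        abs_of_nonneg hδpos.le])
    have h2 : dist (gbar rb ψ (e + δ)) (gbar rb ψ e) < ε :=
      hclose _ (by rw [Real.dist_eq, show e + δ - e = δ by ring, abs_of_nonneg hδpos.le])
    rw [hgm] at h1
    rw [hgp] at h2
    rw [hge] at h1 h2
    rw [Real.dist_eq, abs_sub_lt_iff] at h1 h2 ⊢
    constructor
    · linarith [h1.1]
    · linarith [h2.2]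

/-- Characterization of `rhoTilde ≤ t` through rational test points. -/
lemma rhoTilde_le_iff {rb : ℝ} (hrb : 1 < rb) {φt : ℝ → ℝ}
    (hφt : ContinuousOn φt (Icc 1 rb)) {K e t : ℝ}
    (hK : (fun r => φt r + K / (2 * r ^ 2)) rb ≤ e) (ht1 : 1 ≤ t) (ht2 : t < rb) :
    rhoTilde rb (fun r => φt r + K / (2 * r ^ 2)) e ≤ t ↔
      ∀ q : ℚ, (q : ℝ) ∈ Ioo t rb → φt (q : ℝ) + K / (2 * (q : ℝ) ^ 2) ≤ e := by
  set ψ : ℝ → ℝ := fun r => φt r + K / (2 * r ^ 2) with hψdef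
  have hψcont : ContinuousOn ψ (Icc 1 rb) := by
    apply hφt.add
    apply ContinuousOn.div continuousOn_const
    · fun_prop
    · intro x hx
      have h1x : (1:ℝ) ≤ x := hx.1
      positivity
  constructor
  · intro h q hq
    obtain ⟨a, ha, haq⟩ := exists_lt_of_csInf_lt (A_nonempty hrb.le hK)
      (lt_of_le_of_lt h hq.1)
    exact ha.2 _ ⟨haq.le, hq.2.le⟩
  · intro h
    have hC : IsClosed {s | s ∈ Icc t rb ∧ ψ s ≤ e} := by
      have hset : {s | s ∈ Icc t rb ∧ ψ s ≤ e} = Icc t rb ∩ ψ ⁻¹' Iic e := by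
        ext s; simp [mem_inter_iff, mem_preimage, mem_Iic, mem_setOf_eq]
      rw [hset]
      exact (hψcont.mono (Icc_subset_Icc_left ht1)).preimage_isClosed_of_isClosed
        isClosed_Icc isClosed_Iic
    have hd : Ioo t rb ⊆ closure (Ioo t rb ∩ range ((↑) : ℚ → ℝ)) :=
      Rat.denseRange_cast.open_subset_closure_inter isOpen_Ioo
    have hsub2 : Ioo t rb ∩ range ((↑) : ℚ → ℝ) ⊆ {s | s ∈ Icc t rb ∧ ψ s ≤ e} := by
      rintro s ⟨hs, ⟨q, rfl⟩⟩
      exact ⟨⟨hs.1.le, hs.2.le⟩, h q hs⟩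
    have h1 : closure (Ioo t rb) ⊆ {s | s ∈ Icc t rb ∧ ψ s ≤ e} := by
      calc closure (Ioo t rb)
          ⊆ closure (closure (Ioo t rb ∩ range ((↑) : ℚ → ℝ))) := closure_mono hd
        _ = closure (Ioo t rb ∩ range ((↑) : ℚ → ℝ)) := closure_closure
        _ ⊆ closure {s | s ∈ Icc t rb ∧ ψ s ≤ e} := closure_mono hsub2
        _ = {s | s ∈ Icc t rb ∧ ψ s ≤ e} := hC.closure_eq
    have hsub : Icc t rb ⊆ {s | s ∈ Icc t rb ∧ ψ s ≤ e} := by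
      intro s hs
      exact h1 (by rwa [closure_Ioo (ne_of_lt ht2)])
    have htA : t ∈ A rb ψ e := ⟨⟨ht1, ht2.le⟩, fun s hs => (hsub hs).2⟩
    rw [rhoTilde_eq]
    exact csInf_le (bddBelow_A _ _ _) htA

/-- Measurability of the barrier position as a function of `(w, L)`. -/
lemma measurable_F {rb : ℝ} (hrb : 1 < rb) {φt : ℝ → ℝ}
    (hφt : ContinuousOn φt (Icc 1 rb)) :
    Measurable (fun p : ℝ × ℝ => rhoTilde rb (fun r => φt r + p.2 ^ 2 / (2 * r ^ 2))
      (p.1 ^ 2 / 2 + p.2 ^ 2 / (2 * rb ^ 2))) := by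
  have hrbpos : (0:ℝ) < rb := by linarith
  have hkey : ∀ p : ℝ × ℝ, φt rb ≤ p.1 ^ 2 / 2 →
      ((fun r => φt r + p.2 ^ 2 / (2 * r ^ 2)) rb ≤ p.1 ^ 2 / 2 + p.2 ^ 2 / (2 * rb ^ 2)) := by
    intro p h
    show φt rb + p.2 ^ 2 / (2 * rb ^ 2) ≤ _
    linarith
  have hkey' : ∀ p : ℝ × ℝ, ¬ φt rb ≤ p.1 ^ 2 / 2 →
      (p.1 ^ 2 / 2 + p.2 ^ 2 / (2 * rb ^ 2) < (fun r => φt r + p.2 ^ 2 / (2 * r ^ 2)) rb) := by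
    intro p h
    show _ < φt rb + p.2 ^ 2 / (2 * rb ^ 2)
    rw [not_le] at h
    linarith
  have hS1 : MeasurableSet {p : ℝ × ℝ | φt rb ≤ p.1 ^ 2 / 2} := by
    have hc : Continuous (fun p : ℝ × ℝ => p.1 ^ 2 / 2) := by fun_prop
    exact measurableSet_le measurable_const hc.measurable
  apply measurable_of_Iic
  intro t
  have hpre : ((fun p : ℝ × ℝ => rhoTilde rb (fun r => φt r + p.2 ^ 2 / (2 * r ^ 2))
      (p.1 ^ 2 / 2 + p.2 ^ 2 / (2 * rb ^ 2))) ⁻¹' Iic t) =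
      {p : ℝ × ℝ | rhoTilde rb (fun r => φt r + p.2 ^ 2 / (2 * r ^ 2))
        (p.1 ^ 2 / 2 + p.2 ^ 2 / (2 * rb ^ 2)) ≤ t} := rfl
  rw [hpre]
  rcases lt_or_ge t 0 with ht | ht
  · have hempty : {p : ℝ × ℝ | rhoTilde rb (fun r => φt r + p.2 ^ 2 / (2 * r ^ 2))
        (p.1 ^ 2 / 2 + p.2 ^ 2 / (2 * rb ^ 2)) ≤ t} = ∅ := by
      ext p
      simp only [mem_setOf_eq, mem_empty_iff_false, iff_false, not_le]
      exact lt_of_lt_of_le ht (rhoTilde_nonneg _ _)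
    rw [hempty]; exact MeasurableSet.empty
  rcases lt_or_ge t 1 with ht1 | ht1
  · have hs : {p : ℝ × ℝ | rhoTilde rb (fun r => φt r + p.2 ^ 2 / (2 * r ^ 2))
        (p.1 ^ 2 / 2 + p.2 ^ 2 / (2 * rb ^ 2)) ≤ t} =
        {p : ℝ × ℝ | φt rb ≤ p.1 ^ 2 / 2}ᶜ := by
      ext p
      simp only [mem_setOf_eq, mem_compl_iff]
      constructor
      · intro h hc
        have hone := one_le_rhoTilde hrb.le (fun r => φt r + p.2 ^ 2 / (2 * r ^ 2))
          (hkey p hc)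
        linarith [le_trans hone h]
      · intro h
        rw [rhoTilde_eq_zero (fun r => φt r + p.2 ^ 2 / (2 * r ^ 2)) (hkey' p h)]
        exact ht
    rw [hs]
    exact hS1.compl
  rcases lt_or_ge t rb with ht2 | ht2
  swap
  · have hu : {p : ℝ × ℝ | rhoTilde rb (fun r => φt r + p.2 ^ 2 / (2 * r ^ 2))
        (p.1 ^ 2 / 2 + p.2 ^ 2 / (2 * rb ^ 2)) ≤ t} = univ := by
      ext p
      simp only [mem_setOf_eq, mem_univ, iff_true]
      exact le_trans (rhoTilde_le_rb hrb.le _ _) ht2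
    rw [hu]; exact MeasurableSet.univ
  · -- the interesting case `1 ≤ t < rb`
    have heq : {p : ℝ × ℝ | rhoTilde rb (fun r => φt r + p.2 ^ 2 / (2 * r ^ 2))
        (p.1 ^ 2 / 2 + p.2 ^ 2 / (2 * rb ^ 2)) ≤ t} =
        {p : ℝ × ℝ | φt rb ≤ p.1 ^ 2 / 2}ᶜ ∪
          ⋂ q : {q : ℚ // (q : ℝ) ∈ Ioo t rb},
            {p : ℝ × ℝ | φt ((q : ℚ) : ℝ) + p.2 ^ 2 / (2 * ((q : ℚ) : ℝ) ^ 2) ≤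
              p.1 ^ 2 / 2 + p.2 ^ 2 / (2 * rb ^ 2)} := by
      ext p
      simp only [mem_setOf_eq, mem_union, mem_compl_iff, mem_iInter]
      by_cases hp : φt rb ≤ p.1 ^ 2 / 2
      · rw [rhoTilde_le_iff hrb hφt (hkey p hp) ht1 ht2]
        constructor
        · intro h
          exact Or.inr fun q => h q q.2
        · intro h
          rcases h with h | h
          · exact absurd hp h
          · exact fun q hq => h ⟨q, hq⟩
      · constructor
        · intro _; exact Or.inl hp
        · intro _
          rw [rhoTilde_eq_zero (fun r => φt r + p.2 ^ 2 / (2 * r ^ 2)) (hkey' p hp)]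
          linarith
    rw [heq]
    refine hS1.compl.union (MeasurableSet.iInter fun q => ?_)
    refine measurableSet_le ?_ ?_
    · fun_prop
    · fun_prop

end RhoAux

open RhoAux

/-- **Convergence of the barrier position of the effective potentials:** if continuous
functions `φ_n` converge uniformly on `[1, r_b]` to a continuous `φ`, then for almost every
`(w, L) ∈ ℝ²`,
`ρ̃[φ_n + L²/(2 ·²)](w²/2 + L²/(2 r_b²)) → ρ̃[φ + L²/(2 ·²)](w²/2 + L²/(2 r_b²))`. -/
theorem rhoTilde_effectivePotential_tendsto (rb : ℝ) (hrb : 1 < rb)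
    (φn : ℕ → ℝ → ℝ) (φ : ℝ → ℝ)
    (hcont : ∀ n, ContinuousOn (φn n) (Set.Icc 1 rb))
    (hφ : ContinuousOn φ (Set.Icc 1 rb))
    (hconv : TendstoUniformlyOn φn φ Filter.atTop (Set.Icc 1 rb)) :
    ∀ᵐ p : ℝ × ℝ ∂MeasureTheory.volume,
      Filter.Tendsto
        (fun n => rhoTilde rb (fun r => φn n r + p.2 ^ 2 / (2 * r ^ 2))
          (p.1 ^ 2 / 2 + p.2 ^ 2 / (2 * rb ^ 2)))
        Filter.atTop
        (nhds (rhoTilde rb (fun r => φ r + p.2 ^ 2 / (2 * r ^ 2))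
          (p.1 ^ 2 / 2 + p.2 ^ 2 / (2 * rb ^ 2)))) := by
  classical
  set F : ℝ × ℝ → ℝ := fun p => rhoTilde rb (fun r => φ r + p.2 ^ 2 / (2 * r ^ 2))
      (p.1 ^ 2 / 2 + p.2 ^ 2 / (2 * rb ^ 2)) with hFdef
  set Fn : ℕ → ℝ × ℝ → ℝ := fun n p => rhoTilde rb (fun r => φn n r + p.2 ^ 2 / (2 * r ^ 2))
      (p.1 ^ 2 / 2 + p.2 ^ 2 / (2 * rb ^ 2)) with hFndef
  have hFmeas : Measurable F := measurable_F hrb hφ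
  have hFnmeas : ∀ n, Measurable (Fn n) := fun n => measurable_F hrb (hcont n)
  have hmeasset : MeasurableSet {p : ℝ × ℝ |
      Tendsto (fun n => Fn n p) atTop (𝓝 (F p))} := by
    have h1 : MeasurableSet {p : ℝ × ℝ |
        Tendsto (fun n => Fn n p - F p) atTop (𝓝 0)} :=
      measurableSet_tendsto (𝓝 (0:ℝ)) (fun n => (hFnmeas n).sub hFmeas)
    have h2 : {p : ℝ × ℝ | Tendsto (fun n => Fn n p) atTop (𝓝 (F p))} =
        {p : ℝ × ℝ | Tendsto (fun n => Fn n p - F p) atTop (𝓝 0)} := by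
      ext p
      exact (tendsto_sub_nhds_zero_iff).symm
    rw [h2]; exact h1
  have hmeasset' : MeasurableSet {x : ℝ × ℝ |
      Tendsto (fun n => Fn n (x.1, x.2)) atTop (𝓝 (F (x.1, x.2)))} := by
    exact hmeasset
  show ∀ᵐ p : ℝ × ℝ ∂volume, Tendsto (fun n => Fn n p) atTop (𝓝 (F p))
  rw [MeasureTheory.Measure.volume_eq_prod]
  rw [Measure.ae_prod_iff_ae_ae (p := fun x : ℝ × ℝ =>
    Tendsto (fun n => Fn n x) atTop (𝓝 (F x))) hmeasset]
  rw [Measure.ae_ae_comm (p := fun (x : ℝ) (y : ℝ) =>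
    Tendsto (fun n => Fn n (x, y)) atTop (𝓝 (F (x, y)))) hmeasset']
  -- now : for a.e. `L`, for a.e. `w`, convergence holds
  refine Eventually.of_forall fun L => ?_
  set ψ : ℝ → ℝ := fun r => φ r + L ^ 2 / (2 * r ^ 2) with hψdef
  set c : ℝ := L ^ 2 / (2 * rb ^ 2) with hcdef
  set D : Set ℝ := {x | ¬ContinuousAt (gbar rb ψ) x} with hDdef
  have hDcount : D.Countable := (gbar_antitone hrb.le ψ).countable_not_continuousAt
  set N : Set ℝ := {w | w ^ 2 = 2 * φ rb} ∪ (fun w : ℝ => w ^ 2 / 2 + c) ⁻¹' D with hNdef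
  have hNnull : volume N = 0 := by
    refine measure_union_null ?_ ?_
    · refine measure_mono_null ?_
        (((Set.countable_singleton (-Real.sqrt (2 * φ rb))).insert
          (Real.sqrt (2 * φ rb))).measure_zero volume)
      intro w hw
      have hw' : w ^ 2 = 2 * φ rb := hw
      have habs : |w| = Real.sqrt (2 * φ rb) := by
        rw [← hw', ← Real.sqrt_sq_eq_abs]
      rcases abs_cases w with ⟨h1, _⟩ | ⟨h1, _⟩
      · exact Or.inl (h1.symm.trans habs)
      · exact Or.inr (show w = -Real.sqrt (2 * φ rb) by rw [← habs, h1, neg_neg])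
    · refine measure_mono_null
        (t := ((fun d : ℝ => Real.sqrt (2 * (d - c))) '' D) ∪
          ((fun d : ℝ => -Real.sqrt (2 * (d - c))) '' D)) ?_ ?_
      · intro w hw
        have hd : w ^ 2 / 2 + c ∈ D := hw
        rcases abs_cases w with ⟨h1, _⟩ | ⟨h1, _⟩
        · exact Or.inl ⟨_, hd, by
            show Real.sqrt (2 * (w ^ 2 / 2 + c - c)) = w
            rw [show 2 * (w ^ 2 / 2 + c - c) = w ^ 2 by ring, Real.sqrt_sq_eq_abs]
            exact h1⟩
        · exact Or.inr ⟨_, hd, by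
            show -Real.sqrt (2 * (w ^ 2 / 2 + c - c)) = w
            rw [show 2 * (w ^ 2 / 2 + c - c) = w ^ 2 by ring, Real.sqrt_sq_eq_abs, h1,
              neg_neg]⟩
      · exact measure_union_null
          ((hDcount.image _).measure_zero _) ((hDcount.image _).measure_zero _)
  rw [ae_iff]
  refine measure_mono_null (fun w hw => ?_) hNnull
  simp only [mem_setOf_eq] at hw
  by_contra hwN
  refine hw ?_
  have hne : w ^ 2 / 2 ≠ φ rb := by
    intro h
    exact hwN (Set.mem_union_left _ (show w ^ 2 = 2 * φ rb by linarith))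
  have hcg : ContinuousAt (gbar rb ψ) (w ^ 2 / 2 + c) := by
    by_contra hc
    exact hwN (Set.mem_union_right _ hc)
  exact key hrb hconv w L hne hcg
end

section
/- Let r_b > 1, p ∈ [1,∞], and let φ : [1,r_b] → ℝ be absolutely continuous with weak derivative φ' ∈ L^p(1,r_b). Define φ†(r) := max_{r' ∈ [r, r_b]} φ(r'). Then φ† is absolutely continuous with weak derivative in L^p(1,r_b); more precisely, for every ψ ∈ C¹_c(1,r_b), ∫_1^{r_b} φ†(x) ψ'(x) dx = − ∫_1^{r_b} 1_{{φ†(x) = φ(x)}} φ'(x) ψ(x) dx, so that (φ†)' = 1_{{φ† = φ}} φ' almost everywhere, and consequently ‖(φ†)'‖_{L^p(1,r_b)} ≤ ‖φ'‖_{L^p(1,r_b)}. -/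
open MeasureTheory

/-- `φ†(r) := max_{r' ∈ [r, r_b]} φ(r')`, the smallest non-increasing function dominating `φ`. -/
noncomputable def dag (rb : ℝ) (φ : ℝ → ℝ) (r : ℝ) : ℝ :=
  sSup (φ '' Set.Icc r rb)

namespace DagProof

open Set Filter Topology

variable {rb : ℝ} {φ φ' : ℝ → ℝ}

lemma prim_diff {g : ℝ → ℝ} (hg : IntegrableOn g (Icc 1 rb)) {u v : ℝ}
    (h1u : 1 ≤ u) (huv : u ≤ v) (hv : v ≤ rb) :
    (∫ t in Ioc 1 v, g t) - ∫ t in Ioc 1 u, g t = ∫ t in Ioc u v, g t := by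
  have hu : Ioc 1 u ∪ Ioc u v = Ioc 1 v := Ioc_union_Ioc_eq_Ioc h1u huv
  have h1 : IntegrableOn g (Ioc 1 u) :=
    hg.mono_set (Ioc_subset_Icc_self.trans (Icc_subset_Icc le_rfl (huv.trans hv)))
  have h2 : IntegrableOn g (Ioc u v) :=
    hg.mono_set (fun t ht => ⟨h1u.trans ht.1.le, ht.2.trans hv⟩)
  rw [← hu, setIntegral_union (Ioc_disjoint_Ioc_of_le le_rfl) measurableSet_Ioc h1 h2]
  ring

lemma AC_diff (hIcc : IntegrableOn φ' (Icc 1 rb))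
    (hAC : ∀ x ∈ Set.Icc 1 rb, φ x = φ 1 + ∫ t in Set.Ioc 1 x, φ' t) {u v : ℝ}
    (h1u : 1 ≤ u) (huv : u ≤ v) (hv : v ≤ rb) :
    φ v - φ u = ∫ t in Ioc u v, φ' t := by
  have hpd := prim_diff hIcc h1u huv hv
  rw [hAC v ⟨h1u.trans huv, hv⟩, hAC u ⟨h1u, huv.trans hv⟩]
  linarith

lemma cont_of_AC {g f : ℝ → ℝ} (hg : IntegrableOn g (Icc 1 rb))
    (hAC : ∀ x ∈ Icc (1:ℝ) rb, f x = f 1 + ∫ t in Ioc 1 x, g t) :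
    ContinuousOn f (Icc 1 rb) := by
  have h : ContinuousOn (fun x => f 1 + ∫ t in Ioc 1 x, g t) (Icc 1 rb) :=
    continuousOn_const.add (intervalIntegral.continuousOn_primitive (μ := volume) hg)
  exact ContinuousOn.congr (g := f) h hAC

lemma dag_bddAbove (hc : ContinuousOn φ (Icc 1 rb)) {x : ℝ} (h1x : 1 ≤ x) :
    BddAbove (φ '' Icc x rb) :=
  (isCompact_Icc.image_of_continuousOn (hc.mono (Icc_subset_Icc h1x le_rfl))).bddAbove

lemma le_dag (hc : ContinuousOn φ (Icc 1 rb)) {x t : ℝ} (h1x : 1 ≤ x) (ht : t ∈ Icc x rb) :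
    φ t ≤ dag rb φ x :=
  le_csSup (dag_bddAbove hc h1x) (mem_image_of_mem φ ht)

lemma self_le_dag (hc : ContinuousOn φ (Icc 1 rb)) {x : ℝ} (hx : x ∈ Icc 1 rb) :
    φ x ≤ dag rb φ x := le_dag hc hx.1 ⟨le_rfl, hx.2⟩

lemma dag_anti (hc : ContinuousOn φ (Icc 1 rb)) {x y : ℝ} (h1x : 1 ≤ x) (hxy : x ≤ y)
    (hy : y ≤ rb) : dag rb φ y ≤ dag rb φ x :=
  csSup_le_csSup (dag_bddAbove hc h1x) ((nonempty_Icc.2 hy).image φ)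
    (image_mono (f := φ) (Icc_subset_Icc hxy le_rfl))

lemma dag_split (hc : ContinuousOn φ (Icc 1 rb)) {x y : ℝ} (h1x : 1 ≤ x) (hxy : x ≤ y)
    (hy : y ≤ rb) : dag rb φ x = max (sSup (φ '' Icc x y)) (dag rb φ y) := by
  have hb1 : BddAbove (φ '' Icc x y) :=
    (isCompact_Icc.image_of_continuousOn (hc.mono (Icc_subset_Icc h1x hy))).bddAbove
  have hb2 : BddAbove (φ '' Icc y rb) := dag_bddAbove hc (h1x.trans hxy)
  have hne1 : (φ '' Icc x y).Nonempty := (nonempty_Icc.2 hxy).image φ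
  have hne2 : (φ '' Icc y rb).Nonempty := (nonempty_Icc.2 hy).image φ
  rw [dag, ← Icc_union_Icc_eq_Icc hxy hy, image_union, csSup_union hb1 hne1 hb2 hne2]
  rfl

lemma gap_const (hc : ContinuousOn φ (Icc 1 rb)) {x y : ℝ} (h1x : 1 ≤ x) (hxy : x ≤ y)
    (hy : y ≤ rb) (h : ∀ t ∈ Ico x y, dag rb φ t ≠ φ t) : dag rb φ x = dag rb φ y := by
  rcases eq_or_lt_of_le hxy with rfl | _hlt
  · rfl
  refine le_antisymm ?_ (dag_anti hc h1x hxy hy)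
  rw [dag_split hc h1x hxy hy]
  refine max_le ?_ le_rfl
  by_contra hM
  push_neg at hM
  have hb1 : BddAbove (φ '' Icc x y) :=
    (isCompact_Icc.image_of_continuousOn (hc.mono (Icc_subset_Icc h1x hy))).bddAbove
  obtain ⟨z, hz, hmax⟩ := isCompact_Icc.exists_isMaxOn (nonempty_Icc.2 hxy)
    (hc.mono (Icc_subset_Icc h1x hy))
  have hsup : sSup (φ '' Icc x y) = φ z :=
    le_antisymm (csSup_le ((nonempty_Icc.2 hxy).image φ)
      (by rintro _ ⟨t, ht, rfl⟩; exact hmax ht))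
      (le_csSup hb1 (mem_image_of_mem φ hz))
  rw [hsup] at hM
  have hz1 : (1:ℝ) ≤ z := h1x.trans hz.1
  have hzy : z ≤ y := hz.2
  have hzE : dag rb φ z = φ z := by
    refine le_antisymm ?_ (self_le_dag hc ⟨hz1, hzy.trans hy⟩)
    rw [dag_split hc hz1 hzy hy]
    refine max_le (csSup_le ((nonempty_Icc.2 hzy).image φ) ?_) hM.le
    rintro _ ⟨t, ht, rfl⟩
    exact hmax ⟨hz.1.trans ht.1, ht.2⟩
  rcases eq_or_lt_of_le hzy with rfl | hzy'
  · exact absurd hM (not_lt.2 (self_le_dag hc ⟨hz1, hy⟩))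
  · exact h z ⟨hz.1, hzy'⟩ hzE

lemma dag_sub_le (hc : ContinuousOn φ (Icc 1 rb)) (hIcc : IntegrableOn φ' (Icc 1 rb))
    (hAC : ∀ x ∈ Set.Icc 1 rb, φ x = φ 1 + ∫ t in Set.Ioc 1 x, φ' t) {x y : ℝ}
    (h1x : 1 ≤ x) (hxy : x ≤ y) (hy : y ≤ rb) :
    dag rb φ x - dag rb φ y ≤ ∫ t in Ioc x y, |φ' t| := by
  have habs : IntegrableOn (fun t => |φ' t|) (Icc 1 rb) := hIcc.abs
  have hnn : 0 ≤ ∫ t in Ioc x y, |φ' t| :=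
    setIntegral_nonneg measurableSet_Ioc (fun t _ => abs_nonneg _)
  obtain ⟨z, hz, hmax⟩ := isCompact_Icc.exists_isMaxOn (nonempty_Icc.2 hxy)
    (hc.mono (Icc_subset_Icc h1x hy))
  have h1 : dag rb φ x ≤ max (φ z) (dag rb φ y) := by
    rw [dag_split hc h1x hxy hy]
    exact max_le_max (csSup_le ((nonempty_Icc.2 hxy).image φ)
      (by rintro _ ⟨t, ht, rfl⟩; exact hmax ht)) le_rfl
  rcases le_total (φ z) (dag rb φ y) with hcase | hcase
  · have : dag rb φ x ≤ dag rb φ y := h1.trans (max_le hcase le_rfl)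
    linarith
  · have hφy : φ y ≤ dag rb φ y := self_le_dag hc ⟨h1x.trans hxy, hy⟩
    have h2 : dag rb φ x ≤ φ z := h1.trans (by rw [max_eq_left hcase])
    have h3 : φ y - φ z = ∫ t in Ioc z y, φ' t :=
      AC_diff hIcc hAC (h1x.trans hz.1) hz.2 hy
    have h4 : -∫ t in Ioc z y, φ' t ≤ ∫ t in Ioc z y, |φ' t| := by
      have := norm_integral_le_integral_norm (μ := volume.restrict (Ioc z y)) φ'
      simp only [Real.norm_eq_abs] at this
      linarith [neg_abs_le (∫ t in Ioc z y, φ' t), abs_le.1 (le_refl |∫ t in Ioc z y, φ' t|)]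
    have h5 : ∫ t in Ioc z y, |φ' t| ≤ ∫ t in Ioc x y, |φ' t| := by
      refine setIntegral_mono_set
        (habs.mono_set (fun t ht => ⟨h1x.trans ht.1.le, ht.2.trans hy⟩))
        (Eventually.of_forall fun t => abs_nonneg _)
        (HasSubset.Subset.eventuallyLE (Ioc_subset_Ioc_left hz.1))
    linarith

lemma dag_cont (hc : ContinuousOn φ (Icc 1 rb)) (hIcc : IntegrableOn φ' (Icc 1 rb))
    (hAC : ∀ x ∈ Set.Icc 1 rb, φ x = φ 1 + ∫ t in Set.Ioc 1 x, φ' t) :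
    ContinuousOn (dag rb φ) (Icc 1 rb) := by
  set A : ℝ → ℝ := fun x => ∫ t in Ioc 1 x, |φ' t| with hA
  have hAc : ContinuousOn A (Icc 1 rb) :=
    intervalIntegral.continuousOn_primitive (μ := volume) hIcc.abs
  have key : ∀ u ∈ Icc (1:ℝ) rb, ∀ v ∈ Icc (1:ℝ) rb, u ≤ v →
      |dag rb φ v - dag rb φ u| ≤ A v - A u := by
    intro u hu v hv huv
    have hpd := prim_diff hIcc.abs hu.1 huv hv.2
    have h1 : dag rb φ u - dag rb φ v ≤ A v - A u := by
      have := dag_sub_le hc hIcc hAC hu.1 huv hv.2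
      simp only [hA]
      linarith
    have h2 : dag rb φ v ≤ dag rb φ u := dag_anti hc hu.1 huv hv.2
    have h3 : (0:ℝ) ≤ A v - A u := by
      have : 0 ≤ ∫ t in Ioc u v, |φ' t| :=
        setIntegral_nonneg measurableSet_Ioc fun t _ => abs_nonneg _
      simp only [hA]
      linarith
    rw [abs_of_nonpos (by linarith)]
    linarith
  intro x hx
  have hAx := hAc x hx
  rw [Metric.continuousWithinAt_iff] at hAx ⊢
  intro ε hε
  obtain ⟨δ, hδ, hball⟩ := hAx ε hε
  refine ⟨δ, hδ, fun y hy hyd => ?_⟩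
  have hAb := hball hy hyd
  rw [Real.dist_eq] at hAb ⊢
  rcases le_total y x with h | h
  · have hk := key y hy x hx h
    have : A x - A y ≤ |A y - A x| := by
      have := neg_abs_le (A y - A x); linarith [le_abs_self (A y - A x)]
    calc |dag rb φ y - dag rb φ x| = |dag rb φ x - dag rb φ y| := abs_sub_comm _ _
      _ ≤ A x - A y := hk
      _ ≤ |A y - A x| := this
      _ < ε := hAb
  · have hk := key x hx y hy h
    have : A y - A x ≤ |A y - A x| := le_abs_self _
    calc |dag rb φ y - dag rb φ x| ≤ A y - A x := hk
      _ ≤ |A y - A x| := this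
      _ < ε := hAb

lemma gap_const' (hc : ContinuousOn φ (Icc 1 rb)) (hIcc : IntegrableOn φ' (Icc 1 rb))
    (hAC : ∀ x ∈ Set.Icc 1 rb, φ x = φ 1 + ∫ t in Set.Ioc 1 x, φ' t) {x y : ℝ}
    (h1x : 1 ≤ x) (hxy : x ≤ y) (hy : y ≤ rb)
    (h : ∀ t ∈ Ioo x y, dag rb φ t ≠ φ t) : dag rb φ x = dag rb φ y := by
  rcases eq_or_lt_of_le hxy with rfl | hlt
  · rfl
  refine le_antisymm ?_ (dag_anti hc h1x hxy hy)
  by_contra hcon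
  push_neg at hcon
  set A : ℝ → ℝ := fun x => ∫ t in Ioc 1 x, |φ' t| with hA
  have hAc : ContinuousOn A (Icc 1 rb) :=
    intervalIntegral.continuousOn_primitive (μ := volume) hIcc.abs
  have hkey : ∀ t ∈ Ioo x y, dag rb φ x - dag rb φ y ≤ A t - A x := by
    intro t ht
    have heq : dag rb φ t = dag rb φ y :=
      gap_const hc (h1x.trans ht.1.le) ht.2.le hy
        (fun s hs => h s ⟨ht.1.trans_le hs.1, hs.2⟩)
    have h1 := dag_sub_le hc hIcc hAC h1x ht.1.le (ht.2.le.trans hy)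
    have hpd := prim_diff hIcc.abs h1x ht.1.le (ht.2.le.trans hy)
    simp only [hA]
    rw [← heq]
    linarith
  haveI : (𝓝[Ioo x y] x).NeBot := by
    rw [← mem_closure_iff_nhdsWithin_neBot, closure_Ioo hlt.ne]
    exact left_mem_Icc.2 hlt.le
  have hsub : Ioo x y ⊆ Icc (1:ℝ) rb :=
    fun t ht => ⟨h1x.trans ht.1.le, ht.2.le.trans hy⟩
  have hAx : Tendsto A (𝓝[Ioo x y] x) (𝓝 (A x)) :=
    (hAc.continuousWithinAt ⟨h1x, hxy.trans hy⟩).mono hsub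
  have hev : ∀ᶠ t in 𝓝[Ioo x y] x, A t - A x < dag rb φ x - dag rb φ y := by
    have h' := hAx.eventually_lt_const
      (show A x < A x + (dag rb φ x - dag rb φ y) by linarith)
    filter_upwards [h'] with t ht
    linarith
  obtain ⟨t, ht1, ht2⟩ := (hev.and (eventually_mem_nhdsWithin)).exists
  exact absurd (hkey t ht2) (not_le.2 ht1)

lemma Eset_closed (hc : ContinuousOn φ (Icc 1 rb)) (hIcc : IntegrableOn φ' (Icc 1 rb))
    (hAC : ∀ x ∈ Set.Icc 1 rb, φ x = φ 1 + ∫ t in Set.Ioc 1 x, φ' t) :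
    IsClosed {t : ℝ | t ∈ Icc 1 rb ∧ dag rb φ t = φ t} := by
  have hsub : ContinuousOn (fun t => dag rb φ t - φ t) (Icc 1 rb) :=
    (dag_cont hc hIcc hAC).sub hc
  have heq : {t : ℝ | t ∈ Icc 1 rb ∧ dag rb φ t = φ t}
      = Icc 1 rb ∩ (fun t => dag rb φ t - φ t) ⁻¹' {0} := by
    ext t
    simp [sub_eq_zero]
  rw [heq]
  exact hsub.preimage_isClosed_of_isClosed isClosed_Icc isClosed_singleton

lemma nullGap (hc : ContinuousOn φ (Icc 1 rb)) (hIcc : IntegrableOn φ' (Icc 1 rb))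
    (hAC : ∀ x ∈ Set.Icc 1 rb, φ x = φ 1 + ∫ t in Set.Ioc 1 x, φ' t)
    {a b : ℝ} (h1a : 1 ≤ a) (hab : a ≤ b) (hbrb : b ≤ rb)
    (haE : dag rb φ a = φ a) (hbE : dag rb φ b = φ b) :
    ∫ t in Ioo a b \ {t : ℝ | t ∈ Icc 1 rb ∧ dag rb φ t = φ t}, φ' t = 0 := by
  set E : Set ℝ := {t : ℝ | t ∈ Icc 1 rb ∧ dag rb φ t = φ t} with hE
  set U : Set ℝ := Ioo a b \ E with hU
  have hUsub : U ⊆ Ioo a b := diff_subset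
  have hUIcc : Ioo a b ⊆ Icc 1 rb := fun t ht => ⟨h1a.trans ht.1.le, ht.2.le.trans hbrb⟩
  have hUchar : ∀ t ∈ Ioo a b, (t ∈ U ↔ dag rb φ t ≠ φ t) := by
    intro t ht
    constructor
    · intro h hd; exact h.2 ⟨hUIcc ht, hd⟩
    · intro h; exact ⟨ht, fun hmem => h hmem.2⟩
  have hUopen : IsOpen U := by
    have h1 : ContinuousOn (fun t => dag rb φ t - φ t) (Ioo a b) :=
      ((dag_cont hc hIcc hAC).sub hc).mono hUIcc
    have h2 : IsOpen (Ioo a b ∩ (fun t => dag rb φ t - φ t) ⁻¹' {(0:ℝ)}ᶜ) :=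
      h1.isOpen_inter_preimage isOpen_Ioo (isOpen_compl_iff.2 isClosed_singleton)
    have heq : U = Ioo a b ∩ (fun t => dag rb φ t - φ t) ⁻¹' {(0:ℝ)}ᶜ := by
      ext u
      simp only [mem_inter_iff, mem_preimage, mem_compl_iff, mem_singleton_iff, sub_eq_zero]
      constructor
      · intro hu; exact ⟨hUsub hu, (hUchar u (hUsub hu)).1 hu⟩
      · rintro ⟨h1', h2'⟩; exact (hUchar u h1').2 h2'
    rw [heq]; exact h2
  have hcompzero : ∀ t, (t:ℝ) ∈ U → ∫ u in connectedComponentIn U t, φ' u = 0 := by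
    intro t ht
    set c := connectedComponentIn U t with hcdef
    have hcopen : IsOpen c := hUopen.connectedComponentIn
    have hcsub : c ⊆ U := connectedComponentIn_subset _ _
    have hcIoo : c ⊆ Ioo a b := hcsub.trans hUsub
    have hcne : c.Nonempty := ⟨t, mem_connectedComponentIn ht⟩
    have hbddA : BddAbove c := BddAbove.mono hcIoo bddAbove_Ioo
    have hbddB : BddBelow c := BddBelow.mono hcIoo bddBelow_Ioo
    set i := sInf c with hidef
    set s := sSup c with hsdef
    have hinotc : i ∉ c := by
      intro hic
      obtain ⟨ε, hε, hball⟩ := Metric.isOpen_iff.1 hcopen i hic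
      have hm : i - ε/2 ∈ c := by
        apply hball
        rw [Metric.mem_ball, Real.dist_eq]
        rw [abs_of_nonpos (by linarith)]
        linarith
      have := csInf_le hbddB hm
      linarith
    have hsnotc : s ∉ c := by
      intro hsc
      obtain ⟨ε, hε, hball⟩ := Metric.isOpen_iff.1 hcopen s hsc
      have hm : s + ε/2 ∈ c := by
        apply hball
        rw [Metric.mem_ball, Real.dist_eq]
        rw [abs_of_nonneg (by linarith)]
        linarith
      have := le_csSup hbddA hm
      linarith
    have hic : c = Ioo i s := by
      apply Subset.antisymm
      · intro u hu
        refine ⟨lt_of_le_of_ne (csInf_le hbddB hu) ?_, lt_of_le_of_ne (le_csSup hbddA hu) ?_⟩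
        · intro h; exact hinotc (h ▸ hu)
        · intro h; exact hsnotc (h.symm ▸ hu)
      · intro u hu
        obtain ⟨p, hp, hpu⟩ := exists_lt_of_csInf_lt hcne hu.1
        obtain ⟨q, hq, huq⟩ := exists_lt_of_lt_csSup hcne hu.2
        exact (isPreconnected_connectedComponentIn.ordConnected).out hp hq ⟨hpu.le, huq.le⟩
    have his : i < s := by
      have := hcne
      rw [hic] at this
      exact nonempty_Ioo.1 this
    have hai : a ≤ i := le_csInf hcne (fun u hu => (hcIoo hu).1.le)
    have hsb : s ≤ b := csSup_le hcne (fun u hu => (hcIoo hu).2.le)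
    have hinotU : i ∉ U := by
      intro hiU
      have hc'open : IsOpen (connectedComponentIn U i) := hUopen.connectedComponentIn
      obtain ⟨ε, hε, hball⟩ := Metric.isOpen_iff.1 hc'open i (mem_connectedComponentIn hiU)
      set x0 := min (i + ε/2) ((i + s)/2) with hx0
      have hx0gt : i < x0 := lt_min (by linarith) (by linarith)
      have hx0lt : x0 < s := min_lt_of_right_lt (by linarith)
      have hx0c' : x0 ∈ connectedComponentIn U i := by
        apply hball
        rw [Metric.mem_ball, Real.dist_eq, abs_of_nonneg (by linarith)]
        have : x0 ≤ i + ε/2 := min_le_left _ _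
        linarith
      have hx0c : x0 ∈ c := by rw [hic]; exact ⟨hx0gt, hx0lt⟩
      have he1 := connectedComponentIn_eq hx0c'
      have he2 := connectedComponentIn_eq (show x0 ∈ connectedComponentIn U t from hx0c)
      have : i ∈ c := by
        rw [hcdef, he2, ← he1]
        exact mem_connectedComponentIn hiU
      exact hinotc this
    have hsnotU : s ∉ U := by
      intro hsU
      have hc'open : IsOpen (connectedComponentIn U s) := hUopen.connectedComponentIn
      obtain ⟨ε, hε, hball⟩ := Metric.isOpen_iff.1 hc'open s (mem_connectedComponentIn hsU)
      set x0 := max (s - ε/2) ((i + s)/2) with hx0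
      have hx0lt : x0 < s := max_lt (by linarith) (by linarith)
      have hx0gt : i < x0 := lt_max_of_lt_right (by linarith)
      have hx0c' : x0 ∈ connectedComponentIn U s := by
        apply hball
        rw [Metric.mem_ball, Real.dist_eq, abs_of_nonpos (by linarith)]
        have : s - ε/2 ≤ x0 := le_max_left _ _
        linarith
      have hx0c : x0 ∈ c := by rw [hic]; exact ⟨hx0gt, hx0lt⟩
      have he1 := connectedComponentIn_eq hx0c'
      have he2 := connectedComponentIn_eq (show x0 ∈ connectedComponentIn U t from hx0c)
      have : s ∈ c := by
        rw [hcdef, he2, ← he1]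
        exact mem_connectedComponentIn hsU
      exact hsnotc this
    have hiE : dag rb φ i = φ i := by
      rcases eq_or_lt_of_le hai with heqa | hai'
      · rw [← heqa]; exact haE
      · have hiIoo : i ∈ Ioo a b := ⟨hai', his.trans_le hsb⟩
        by_contra hne
        exact hinotU ((hUchar i hiIoo).2 hne)
    have hsE : dag rb φ s = φ s := by
      rcases eq_or_lt_of_le hsb with heqb | hsb'
      · rw [heqb]; exact hbE
      · have hsIoo : s ∈ Ioo a b := ⟨hai.trans_lt his, hsb'⟩
        by_contra hne
        exact hsnotU ((hUchar s hsIoo).2 hne)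
    have hFis : dag rb φ i = dag rb φ s := by
      refine gap_const' hc hIcc hAC (h1a.trans hai) his.le (hsb.trans hbrb) ?_
      intro u hu
      have huU : u ∈ U := hcsub (by rw [hic]; exact hu)
      exact (hUchar u (hUsub huU)).1 huU
    have hint : φ s - φ i = ∫ u in Ioc i s, φ' u :=
      AC_diff hIcc hAC (h1a.trans hai) his.le (hsb.trans hbrb)
    have hzero : ∫ u in Ioc i s, φ' u = 0 := by
      rw [← hint, ← hiE, ← hsE, hFis]
      ring
    rw [hic, ← integral_Ioc_eq_integral_Ioo]
    exact hzero
  set C : Set (Set ℝ) := (fun q : ℚ => connectedComponentIn U (q:ℝ)) '' {q : ℚ | (q:ℝ) ∈ U} with hC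
  have hCc : C.Countable := (Set.to_countable _).image _
  haveI : Countable C := hCc.to_subtype
  have hUnion : ⋃ c : C, (c : Set ℝ) = U := by
    apply Subset.antisymm
    · rintro u hu
      simp only [mem_iUnion] at hu
      obtain ⟨⟨c, hcC⟩, hcc⟩ := hu
      obtain ⟨q, hq, rfl⟩ := hcC
      exact connectedComponentIn_subset _ _ hcc
    · intro u hu
      have hopen : IsOpen (connectedComponentIn U u) := hUopen.connectedComponentIn
      obtain ⟨ε, hε, hball⟩ := Metric.isOpen_iff.1 hopen u (mem_connectedComponentIn hu)
      obtain ⟨q, hq1, hq2⟩ := exists_rat_btwn (show u - ε < u by linarith)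
      have hqball : (q:ℝ) ∈ connectedComponentIn U u := by
        apply hball
        rw [Metric.mem_ball, Real.dist_eq, abs_of_nonpos (by linarith)]
        linarith
      have hqU : (q:ℝ) ∈ U := connectedComponentIn_subset _ _ hqball
      have heq := connectedComponentIn_eq hqball
      simp only [mem_iUnion]
      refine ⟨⟨connectedComponentIn U (q:ℝ), ⟨q, hqU, rfl⟩⟩, ?_⟩
      show u ∈ connectedComponentIn U (q:ℝ)
      rw [← heq]
      exact mem_connectedComponentIn hu
  have hdisj : Pairwise (Function.onFun Disjoint fun c : C => (c : Set ℝ)) := by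
    rintro ⟨c1, hc1⟩ ⟨c2, hc2⟩ hne
    simp only [Function.onFun]
    rw [Set.disjoint_left]
    intro u hu1 hu2
    obtain ⟨q1, hq1, rfl⟩ := hc1
    obtain ⟨q2, hq2, rfl⟩ := hc2
    refine hne (Subtype.ext ?_)
    show connectedComponentIn U (q1:ℝ) = connectedComponentIn U (q2:ℝ)
    have h1' : u ∈ connectedComponentIn U (q1:ℝ) := hu1
    have h2' : u ∈ connectedComponentIn U (q2:ℝ) := hu2
    rw [connectedComponentIn_eq h1', connectedComponentIn_eq h2']
  have hmeas : ∀ c : C, MeasurableSet (c : Set ℝ) := by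
    rintro ⟨c, hcC⟩
    obtain ⟨q, hq, rfl⟩ := hcC
    exact hUopen.connectedComponentIn.measurableSet
  have hIntU : IntegrableOn φ' U := hIcc.mono_set (hUsub.trans hUIcc)
  have hzero : ∀ c : C, ∫ u in (c : Set ℝ), φ' u = 0 := by
    rintro ⟨c, hcC⟩
    obtain ⟨q, hq, rfl⟩ := hcC
    exact hcompzero _ hq
  calc ∫ u in U, φ' u = ∫ u in ⋃ c : C, (c : Set ℝ), φ' u := by rw [hUnion]
    _ = ∑' c : C, ∫ u in (c : Set ℝ), φ' u :=
        integral_iUnion hmeas hdisj (by rw [hUnion]; exact hIntU)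
    _ = 0 := by rw [tsum_congr hzero, tsum_zero]

lemma rep (hc : ContinuousOn φ (Icc 1 rb)) (hIcc : IntegrableOn φ' (Icc 1 rb))
    (hAC : ∀ x ∈ Set.Icc 1 rb, φ x = φ 1 + ∫ t in Set.Ioc 1 x, φ' t)
    {x : ℝ} (hx : x ∈ Icc 1 rb) :
    dag rb φ x = dag rb φ 1 +
      ∫ t in Ioc 1 x, Set.indicator {t : ℝ | t ∈ Icc 1 rb ∧ dag rb φ t = φ t} φ' t := by
  set E : Set ℝ := {t : ℝ | t ∈ Icc 1 rb ∧ dag rb φ t = φ t} with hE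
  have hEmeas : MeasurableSet E := (Eset_closed hc hIcc hAC).measurableSet
  set g : ℝ → ℝ := E.indicator φ' with hg
  have hgInt : IntegrableOn g (Icc 1 rb) := hIcc.indicator hEmeas
  set S : Set ℝ := {t : ℝ | t ∈ Icc 1 x ∧ dag rb φ t = φ t} with hS
  have hSsub : S ⊆ Icc 1 x := fun t ht => ht.1
  have hSbb : BddBelow S := (bddBelow_Icc).mono hSsub
  have hSba : BddAbove S := (bddAbove_Icc).mono hSsub
  by_cases hSne : S.Nonempty
  · have hScl : IsClosed S := by
      have : S = Icc 1 x ∩ E := by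
        ext t
        simp only [hS, hE, mem_setOf_eq, mem_inter_iff]
        constructor
        · rintro ⟨ht, hd⟩; exact ⟨ht, ⟨⟨ht.1, ht.2.trans hx.2⟩, hd⟩, ⟩
        · rintro ⟨ht, _, hd⟩; exact ⟨ht, hd⟩
      rw [this]
      exact isClosed_Icc.inter (Eset_closed hc hIcc hAC)
    set α := sInf S with hα
    set β := sSup S with hβ
    have hαS : α ∈ S := hScl.csInf_mem hSne hSbb
    have hβS : β ∈ S := hScl.csSup_mem hSne hSba
    have h1α : (1:ℝ) ≤ α := hαS.1.1
    have hαβ : α ≤ β := csInf_le_csSup hSne hSbb hSba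
    have hβx : β ≤ x := hβS.1.2
    have hβrb : β ≤ rb := hβx.trans hx.2
    have hF1α : dag rb φ 1 = dag rb φ α := by
      refine gap_const hc le_rfl h1α (hαS.1.2.trans hx.2) ?_
      intro t ht hco
      have htS : t ∈ S := ⟨⟨ht.1, ht.2.le.trans hαS.1.2⟩, hco⟩
      exact absurd (csInf_le hSbb htS) (not_le.2 ht.2)
    have hFβx : dag rb φ β = dag rb φ x := by
      refine gap_const' hc hIcc hAC (h1α.trans hαβ) hβx hx.2 ?_
      intro t ht hco
      have htS : t ∈ S := ⟨⟨(h1α.trans hαβ).trans ht.1.le, ht.2.le⟩, hco⟩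
      exact absurd (le_csSup hSba htS) (not_le.2 ht.1)
    have hdiff : φ β - φ α = ∫ t in Ioc α β, φ' t :=
      AC_diff hIcc hAC h1α hαβ hβrb
    have hβE : β ∈ E := ⟨⟨h1α.trans hαβ, hβrb⟩, hβS.2⟩
    have hg1 : ∫ t in Ioc 1 α, g t = 0 := by
      rw [integral_Ioc_eq_integral_Ioo]
      refine setIntegral_eq_zero_of_forall_eq_zero ?_
      intro t ht
      refine indicator_of_notMem ?_ _
      intro htE
      have htS : t ∈ S := ⟨⟨ht.1.le, ht.2.le.trans hαS.1.2⟩, htE.2⟩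
      exact absurd (csInf_le hSbb htS) (not_le.2 ht.2)
    have hg3 : ∫ t in Ioc β x, g t = 0 := by
      refine setIntegral_eq_zero_of_forall_eq_zero ?_
      intro t ht
      refine indicator_of_notMem ?_ _
      intro htE
      have htS : t ∈ S := ⟨⟨h1α.trans (hαβ.trans ht.1.le), ht.2⟩, htE.2⟩
      exact absurd (le_csSup hSba htS) (not_le.2 ht.1)
    have hg2 : ∫ t in Ioc α β, g t = ∫ t in Ioc α β, φ' t := by
      have hIooIcc : IntegrableOn φ' (Ioc α β) :=
        hIcc.mono_set (fun t ht => ⟨h1α.trans ht.1.le, ht.2.trans hβrb⟩)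
      have hsplit := integral_inter_add_diff (s := Ioc α β) (f := φ') (μ := volume)
        hEmeas hIooIcc
      have hdiffset : Ioc α β \ E = Ioo α β \ E := by
        ext t
        constructor
        · rintro ⟨ht, htE⟩
          refine ⟨⟨ht.1, lt_of_le_of_ne ht.2 ?_⟩, htE⟩
          intro h
          exact htE (h ▸ hβE)
        · rintro ⟨ht, htE⟩
          exact ⟨⟨ht.1, ht.2.le⟩, htE⟩
      have hnull := nullGap hc hIcc hAC h1α hαβ hβrb hαS.2 hβS.2
      rw [hg, setIntegral_indicator hEmeas]
      rw [hdiffset] at hsplit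
      rw [hnull] at hsplit
      linarith
    have hsp1 : ∫ t in Ioc 1 x, g t = (∫ t in Ioc 1 α, g t) + ∫ t in Ioc α x, g t := by
      rw [← Ioc_union_Ioc_eq_Ioc h1α (hαβ.trans hβx),
        setIntegral_union (Ioc_disjoint_Ioc_of_le le_rfl) measurableSet_Ioc
          (hgInt.mono_set (fun t ht => ⟨ht.1.le, ht.2.trans ((hαβ.trans hβx).trans hx.2)⟩))
          (hgInt.mono_set (fun t ht => ⟨h1α.trans ht.1.le, ht.2.trans hx.2⟩))]
    have hsp2 : ∫ t in Ioc α x, g t = (∫ t in Ioc α β, g t) + ∫ t in Ioc β x, g t := by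
      rw [← Ioc_union_Ioc_eq_Ioc hαβ hβx,
        setIntegral_union (Ioc_disjoint_Ioc_of_le le_rfl) measurableSet_Ioc
          (hgInt.mono_set (fun t ht => ⟨h1α.trans ht.1.le, ht.2.trans hβrb⟩))
          (hgInt.mono_set (fun t ht => ⟨h1α.trans (hαβ.trans ht.1.le), ht.2.trans hx.2⟩))]
    have hαE' : dag rb φ α = φ α := hαS.2
    have hβE' : dag rb φ β = φ β := hβS.2
    rw [hsp1, hsp2, hg1, hg2, hg3, ← hdiff, hF1α]
    linarith [hFβx]
  · have h0 : ∀ t ∈ Ico (1:ℝ) x, dag rb φ t ≠ φ t := by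
      intro t ht hcontra
      exact hSne ⟨t, ⟨⟨ht.1, ht.2.le⟩, hcontra⟩⟩
    have hF : dag rb φ 1 = dag rb φ x := gap_const hc le_rfl hx.1 hx.2 h0
    have hzero : ∫ t in Ioc 1 x, g t = 0 := by
      rw [integral_Ioc_eq_integral_Ioo]
      refine setIntegral_eq_zero_of_forall_eq_zero ?_
      intro t ht
      refine indicator_of_notMem ?_ _
      intro htE
      exact h0 t ⟨ht.1.le, ht.2⟩ htE.2
    rw [hzero, hF]
    ring

lemma ibp {g F : ℝ → ℝ} (hrb : 1 < rb) (hg : IntegrableOn g (Icc 1 rb))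
    (hrep : ∀ x ∈ Icc (1:ℝ) rb, F x = F 1 + ∫ t in Ioc 1 x, g t)
    (ψ : ℝ → ℝ) (hψ : ContDiff ℝ 1 ψ) (hsupp : Function.support ψ ⊆ Ioo 1 rb) :
    ∫ x in Ioo 1 rb, F x * deriv ψ x = - ∫ x in Ioo 1 rb, g x * ψ x := by
  have hψd : Differentiable ℝ ψ := hψ.differentiable one_ne_zero
  have hψ' : Continuous (deriv ψ) := hψ.continuous_deriv le_rfl
  have hψ1 : ψ 1 = 0 := by
    by_contra h
    exact (lt_irrefl (1:ℝ)) (hsupp (Function.mem_support.2 h)).1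
  have hψrb : ψ rb = 0 := by
    by_contra h
    exact (lt_irrefl rb) (hsupp (Function.mem_support.2 h)).2
  have hFTC : ∀ t ∈ Icc (1:ℝ) rb, ∫ u in Ioc t rb, deriv ψ u = - ψ t := by
    intro t ht
    rw [← intervalIntegral.integral_of_le ht.2,
      intervalIntegral.integral_deriv_eq_sub (fun u _ => hψd u)
        ((hψ'.intervalIntegrable _ _)), hψrb, zero_sub]
  have hgB : IntegrableOn g (Ioo 1 rb) := hg.mono_set Ioo_subset_Icc_self
  have hψ'B : IntegrableOn (deriv ψ) (Ioo 1 rb) :=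
    (hψ'.integrableOn_Icc).mono_set Ioo_subset_Icc_self
  set k : ℝ × ℝ → ℝ :=
    ({q : ℝ × ℝ | q.2 ≤ q.1}).indicator (fun q => deriv ψ q.1 * g q.2) with hk
  have hDmeas : MeasurableSet {q : ℝ × ℝ | q.2 ≤ q.1} :=
    measurableSet_le measurable_snd measurable_fst
  have hkInt : Integrable k
      ((volume.restrict (Ioo 1 rb)).prod (volume.restrict (Ioo 1 rb))) :=
    (Integrable.mul_prod hψ'B hgB).indicator hDmeas
  have hswap := integral_integral_swap (f := fun x t => k (x, t))
    (μ := volume.restrict (Ioo 1 rb)) (ν := volume.restrict (Ioo 1 rb)) hkInt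
  have hGdef : ∀ x ∈ Ioo (1:ℝ) rb,
      (∫ t in Ioo 1 rb, k (x, t)) = (∫ t in Ioc 1 x, g t) * deriv ψ x := by
    intro x hx
    have h1 : (fun t => k (x, t)) = (Iic x).indicator (fun t => deriv ψ x * g t) := by
      funext t
      by_cases h : t ≤ x
      · rw [hk, Set.indicator_of_mem (show (x,t) ∈ {q : ℝ×ℝ | q.2 ≤ q.1} from h),
          Set.indicator_of_mem (mem_Iic.2 h)]
      · rw [hk, Set.indicator_of_notMem (show (x,t) ∉ {q : ℝ×ℝ | q.2 ≤ q.1} from h),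
          Set.indicator_of_notMem (fun hh => h (mem_Iic.1 hh))]
    rw [h1, setIntegral_indicator measurableSet_Iic]
    have h2 : Ioo (1:ℝ) rb ∩ Iic x = Ioc 1 x := by
      ext t
      simp only [mem_inter_iff, mem_Ioo, mem_Iic, mem_Ioc]
      constructor
      · rintro ⟨⟨h1', _⟩, h3'⟩; exact ⟨h1', h3'⟩
      · rintro ⟨h1', h2'⟩; exact ⟨⟨h1', h2'.trans_lt hx.2⟩, h2'⟩
    rw [h2, integral_const_mul]
    ring
  have hHdef : ∀ t ∈ Ioo (1:ℝ) rb, (∫ x in Ioo 1 rb, k (x, t)) = -(g t * ψ t) := by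
    intro t ht
    have h1 : (fun x => k (x, t)) = (Ici t).indicator (fun x => deriv ψ x * g t) := by
      funext x
      by_cases h : t ≤ x
      · rw [hk, Set.indicator_of_mem (show (x,t) ∈ {q : ℝ×ℝ | q.2 ≤ q.1} from h),
          Set.indicator_of_mem (mem_Ici.2 h)]
      · rw [hk, Set.indicator_of_notMem (show (x,t) ∉ {q : ℝ×ℝ | q.2 ≤ q.1} from h),
          Set.indicator_of_notMem (fun hh => h (mem_Ici.1 hh))]
    rw [h1, setIntegral_indicator measurableSet_Ici]
    have h2 : Ioo (1:ℝ) rb ∩ Ici t = Ico t rb := by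
      ext u
      simp only [mem_inter_iff, mem_Ioo, mem_Ici, mem_Ico]
      constructor
      · rintro ⟨⟨_, h2'⟩, h3'⟩; exact ⟨h3', h2'⟩
      · rintro ⟨h1', h2'⟩; exact ⟨⟨ht.1.trans_le h1', h2'⟩, h1'⟩
    have h3 : ∫ u in Ico t rb, deriv ψ u = - ψ t := by
      rw [integral_Ico_eq_integral_Ioo, ← integral_Ioc_eq_integral_Ioo]
      exact hFTC t ⟨ht.1.le, ht.2.le⟩
    rw [h2, integral_mul_const, h3]
    ring
  have hGc : ContinuousOn (fun x => ∫ t in Ioc 1 x, g t) (Icc 1 rb) :=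
    intervalIntegral.continuousOn_primitive (μ := volume) hg
  have hGint : IntegrableOn (fun x => (∫ t in Ioc 1 x, g t) * deriv ψ x) (Ioo 1 rb) :=
    ((hGc.mul hψ'.continuousOn).integrableOn_compact isCompact_Icc).mono_set
      Ioo_subset_Icc_self
  have hconst : IntegrableOn (fun x => F 1 * deriv ψ x) (Ioo 1 rb) := hψ'B.const_mul _
  have step1 : ∫ x in Ioo 1 rb, F x * deriv ψ x
      = (∫ x in Ioo 1 rb, F 1 * deriv ψ x)
        + ∫ x in Ioo 1 rb, (∫ t in Ioc 1 x, g t) * deriv ψ x := by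
    rw [← integral_add hconst hGint]
    refine setIntegral_congr_fun measurableSet_Ioo ?_
    intro x hx
    show F x * deriv ψ x = F 1 * deriv ψ x + (∫ t in Ioc 1 x, g t) * deriv ψ x
    rw [hrep x (Ioo_subset_Icc_self hx)]
    ring
  have step2 : ∫ x in Ioo 1 rb, F 1 * deriv ψ x = 0 := by
    rw [integral_const_mul]
    have hz : ∫ x in Ioo (1:ℝ) rb, deriv ψ x = 0 := by
      rw [← integral_Ioc_eq_integral_Ioo, ← intervalIntegral.integral_of_le hrb.le,
        intervalIntegral.integral_deriv_eq_sub (fun u _ => hψd u)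
          (hψ'.intervalIntegrable _ _), hψrb, hψ1, sub_zero]
    rw [hz, mul_zero]
  have step3 : ∫ x in Ioo 1 rb, (∫ t in Ioc 1 x, g t) * deriv ψ x
      = - ∫ x in Ioo 1 rb, g x * ψ x := by
    have l1 : ∫ x in Ioo 1 rb, (∫ t in Ioc 1 x, g t) * deriv ψ x
        = ∫ x in Ioo 1 rb, ∫ t in Ioo 1 rb, k (x, t) := by
      refine setIntegral_congr_fun measurableSet_Ioo ?_
      intro x hx
      exact (hGdef x hx).symm
    have l2 : ∫ t in Ioo 1 rb, ∫ x in Ioo 1 rb, k (x, t)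
        = ∫ t in Ioo 1 rb, -(g t * ψ t) := by
      refine setIntegral_congr_fun measurableSet_Ioo ?_
      intro t ht
      exact hHdef t ht
    rw [l1, hswap, l2, integral_neg]
  rw [step1, step2, step3, zero_add]

end DagProof

/-- **The envelope preserves `W^{1,p}` regularity:** if `φ` is absolutely continuous on
`[1, r_b]` with weak derivative `φ' ∈ L^p(1, r_b)` (`1 ≤ p ≤ ∞`), then `φ†` is absolutely
continuous with weak derivative `(φ†)' = 1_{{φ† = φ}} φ'`: it satisfies the integration by
parts identity against every `ψ ∈ C¹_c(1, r_b)`, and `‖(φ†)'‖_{L^p} ≤ ‖φ'‖_{L^p}`. -/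
theorem dag_sobolev (rb : ℝ) (hrb : 1 < rb) (p : ENNReal) (hp : 1 ≤ p)
    (φ φ' : ℝ → ℝ) (hmeas : Measurable φ')
    (hInt : IntegrableOn φ' (Set.Ioo 1 rb))
    (hAC : ∀ x ∈ Set.Icc 1 rb, φ x = φ 1 + ∫ t in Set.Ioc 1 x, φ' t)
    (hLp : MemLp φ' p (volume.restrict (Set.Ioo 1 rb))) :
    (∀ x ∈ Set.Icc 1 rb,
      dag rb φ x = dag rb φ 1 +
        ∫ t in Set.Ioc 1 x, Set.indicator {y | dag rb φ y = φ y} φ' t) ∧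
    (∀ ψ : ℝ → ℝ, ContDiff ℝ 1 ψ → HasCompactSupport ψ →
      Function.support ψ ⊆ Set.Ioo 1 rb →
      ∫ x in Set.Ioo 1 rb, dag rb φ x * deriv ψ x
        = - ∫ x in Set.Ioo 1 rb, Set.indicator {y | dag rb φ y = φ y} φ' x * ψ x) ∧
    eLpNorm (Set.indicator {y | dag rb φ y = φ y} φ') p (volume.restrict (Set.Ioo 1 rb))
      ≤ eLpNorm φ' p (volume.restrict (Set.Ioo 1 rb)) := by
  have hIcc : IntegrableOn φ' (Set.Icc 1 rb) :=
    (integrableOn_Icc_iff_integrableOn_Ioo).2 hInt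
  have hc : ContinuousOn φ (Set.Icc 1 rb) := DagProof.cont_of_AC hIcc hAC
  set E' : Set ℝ := {t : ℝ | t ∈ Set.Icc 1 rb ∧ dag rb φ t = φ t} with hE'
  have hE'meas : MeasurableSet E' := (DagProof.Eset_closed hc hIcc hAC).measurableSet
  have hind : ∀ t ∈ Set.Icc 1 rb,
      Set.indicator {y | dag rb φ y = φ y} φ' t = Set.indicator E' φ' t := by
    intro t ht
    by_cases h : dag rb φ t = φ t
    · rw [Set.indicator_of_mem (show t ∈ {y | dag rb φ y = φ y} from h),
        Set.indicator_of_mem (show t ∈ E' from ⟨ht, h⟩)]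
    · rw [Set.indicator_of_notMem (show t ∉ {y | dag rb φ y = φ y} from h),
        Set.indicator_of_notMem
          (show t ∉ E' from fun hh => h (Set.mem_setOf.1 hh).2)]
  have part1 : ∀ x ∈ Set.Icc 1 rb, dag rb φ x = dag rb φ 1 +
      ∫ t in Set.Ioc 1 x, Set.indicator {y | dag rb φ y = φ y} φ' t := by
    intro x hx
    have hr := DagProof.rep hc hIcc hAC hx
    have hcong : ∫ t in Set.Ioc 1 x, Set.indicator {y | dag rb φ y = φ y} φ' t
        = ∫ t in Set.Ioc 1 x, Set.indicator E' φ' t :=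
      setIntegral_congr_fun measurableSet_Ioc
        (fun t ht => hind t ⟨ht.1.le, ht.2.trans hx.2⟩)
    rw [hcong]
    exact hr
  refine ⟨part1, ?_, eLpNorm_indicator_le φ'⟩
  intro ψ hψ _ hsupp
  have hgIcc : IntegrableOn (Set.indicator E' φ') (Set.Icc 1 rb) := hIcc.indicator hE'meas
  have hibp := DagProof.ibp hrb hgIcc (fun x hx => DagProof.rep hc hIcc hAC hx) ψ hψ hsupp
  have hcong : ∫ x in Set.Ioo 1 rb, Set.indicator {y | dag rb φ y = φ y} φ' x * ψ x
      = ∫ x in Set.Ioo 1 rb, Set.indicator E' φ' x * ψ x := by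
    refine setIntegral_congr_fun measurableSet_Ioo ?_
    intro x hx
    show Set.indicator {y | dag rb φ y = φ y} φ' x * ψ x = Set.indicator E' φ' x * ψ x
    rw [hind x (Set.Ioo_subset_Icc_self hx)]
  rw [hcong]
  exact hibp
end

section
/- Let λ > 0, 0 < b ≤ 1/2, and p ∈ [1,2). Then ∫_{λ}^{λ/√(1−b)} |w|^{p−1} |w² − λ²|^{−p/2} dw ≤ 1/(1 − p/2). -/
open Real MeasureTheory Set intervalIntegral

set_option maxHeartbeats 1000000 in
/-- Elementary integral estimate (second half of the potential-barrier singularity):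
for `λ > 0`, `0 < b ≤ 1/2` and `p ∈ [1,2)`,
`∫_{λ}^{λ/√(1-b)} |w|^{p-1} |w² - λ²|^{-p/2} dw ≤ 1/(1-p/2)`. -/
theorem integral_singularity_right (lam b p : ℝ) (hlam : 0 < lam)
    (hb0 : 0 < b) (hb : b ≤ 1 / 2) (hp1 : 1 ≤ p) (hp2 : p < 2) :
    ∫ w in lam..(lam / Real.sqrt (1 - b)), |w| ^ (p - 1) / |w ^ 2 - lam ^ 2| ^ (p / 2)
      ≤ 1 / (1 - p / 2) := by
  have h1b : (0:ℝ) < 1 - b := by linarith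
  set s := Real.sqrt (1 - b) with hs
  have hs0 : 0 < s := Real.sqrt_pos.mpr h1b
  have hs2 : s ^ 2 = 1 - b := Real.sq_sqrt h1b.le
  set m := lam / s with hm
  have hlm : lam < m := by
    rw [hm, lt_div_iff₀ hs0]; nlinarith
  have hm0 : 0 < m := hlam.trans hlm
  have hmsq : m ^ 2 = lam ^ 2 / (1 - b) := by rw [hm, div_pow, hs2]
  have hm2 : m ^ 2 ≤ 2 * lam ^ 2 := by
    rw [hmsq, div_le_iff₀ h1b]; nlinarith
  have h2p : (0:ℝ) < 2 - p := by linarith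
  have hp2' : p / 2 ≠ 0 := by positivity
  -- the comparison function and its antiderivative
  set f : ℝ → ℝ := fun w => |w| ^ (p - 1) / |w ^ 2 - lam ^ 2| ^ (p / 2) with hf
  set g : ℝ → ℝ := fun w => 2 * lam ^ 2 * w ^ (p - 3) / (w ^ 2 - lam ^ 2) ^ (p / 2) with hg
  set G : ℝ → ℝ := fun w => (2 / (2 - p)) * ((w ^ 2 - lam ^ 2) / w ^ 2) ^ (1 - p / 2) with hG
  -- pointwise comparison on the closed interval
  have hcomp : ∀ x ∈ Icc lam m, f x ≤ g x := by
    intro x hx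
    obtain ⟨hx1, hx2⟩ := hx
    have hx0 : 0 < x := lt_of_lt_of_le hlam hx1
    have habs : |x| = x := abs_of_pos hx0
    have hsub0 : 0 ≤ x ^ 2 - lam ^ 2 := by nlinarith
    have habs2 : |x ^ 2 - lam ^ 2| = x ^ 2 - lam ^ 2 := abs_of_nonneg hsub0
    simp only [hf, hg, habs, habs2]
    rcases eq_or_lt_of_le hx1 with h | h
    · rw [← h]
      simp [Real.zero_rpow hp2']
    · have hd : 0 < (x ^ 2 - lam ^ 2) ^ (p / 2) := by
        apply Real.rpow_pos_of_pos; nlinarith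
      rw [div_le_div_iff_of_pos_right hd]
      have hxp : x ^ (p - 1) = x ^ 2 * x ^ (p - 3) := by
        rw [← Real.rpow_natCast x 2, ← Real.rpow_add hx0]; norm_num
        congr 1; ring
      have h3 : (0:ℝ) ≤ x ^ (p - 3) := Real.rpow_nonneg hx0.le _
      have hx2b : x ^ 2 ≤ 2 * lam ^ 2 := by nlinarith
      rw [hxp]
      exact mul_le_mul_of_nonneg_right hx2b h3
  have hlm' : lam ≤ m := hlm.le
  -- nonnegativity
  have hfnn : ∀ x, 0 ≤ f x := fun x => by
    simp only [hf]; positivity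
  have hgnn : ∀ x ∈ Ioc lam m, 0 ≤ g x := by
    intro x hx
    have hx0 : 0 < x := hlam.trans hx.1
    have hsub0 : 0 ≤ x ^ 2 - lam ^ 2 := by nlinarith [hx.1]
    simp only [hg]
    have := Real.rpow_nonneg hx0.le (p - 3)
    have := Real.rpow_nonneg hsub0 (p / 2)
    positivity
  -- dominating function
  set C : ℝ := 2 * lam ^ 2 * lam ^ (p - 3) / (2 * lam) ^ (p / 2) with hC
  have hC0 : 0 ≤ C := by
    have := Real.rpow_nonneg hlam.le (p - 3)
    have := Real.rpow_nonneg (by linarith : (0:ℝ) ≤ 2 * lam) (p / 2)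
    positivity
  have hdom : ∀ x ∈ Ioc lam m, g x ≤ C * (x - lam) ^ (-(p / 2)) := by
    intro x hx
    have hx0 : 0 < x := hlam.trans hx.1
    have hxl : 0 < x - lam := by linarith [hx.1]
    have hsubpos : 0 < x ^ 2 - lam ^ 2 := by nlinarith [hx.1]
    have hnum : 2 * lam ^ 2 * x ^ (p - 3) ≤ 2 * lam ^ 2 * lam ^ (p - 3) := by
      have := Real.rpow_le_rpow_of_nonpos hlam hx.1.le (by linarith : p - 3 ≤ 0)
      nlinarith [sq_nonneg lam]
    have hden : ((x - lam) * (2 * lam)) ^ (p / 2) ≤ (x ^ 2 - lam ^ 2) ^ (p / 2) := by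
      apply Real.rpow_le_rpow (by positivity) (by nlinarith [hx.1]) (by positivity)
    have hdpos : (0:ℝ) < ((x - lam) * (2 * lam)) ^ (p / 2) :=
      Real.rpow_pos_of_pos (by positivity) _
    have h1 : g x ≤ 2 * lam ^ 2 * lam ^ (p - 3) / ((x - lam) * (2 * lam)) ^ (p / 2) := by
      simp only [hg]
      apply div_le_div₀ (by positivity) hnum hdpos hden
    calc g x ≤ 2 * lam ^ 2 * lam ^ (p - 3) / ((x - lam) * (2 * lam)) ^ (p / 2) := h1
      _ = C * (x - lam) ^ (-(p / 2)) := by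
        rw [Real.mul_rpow hxl.le (by linarith : (0:ℝ) ≤ 2 * lam),
          Real.rpow_neg hxl.le, hC, mul_comm ((x - lam) ^ (p / 2)), ← div_div,
          div_eq_mul_inv]
  -- integrability of the dominating function
  have hIntDom : IntervalIntegrable (fun x => C * (x - lam) ^ (-(p / 2))) volume lam m := by
    have base : IntervalIntegrable (fun x : ℝ => x ^ (-(p / 2))) volume 0 (m - lam) :=
      intervalIntegral.intervalIntegrable_rpow' (by linarith)
    have := (base.comp_sub_right lam).const_mul C
    simpa using this
  -- integrability of g
  have hIntg : IntervalIntegrable g volume lam m := by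
    apply hIntDom.mono_fun
    · apply Measurable.aestronglyMeasurable
      simp only [hg]
      fun_prop
    · rw [Filter.EventuallyLE, ae_restrict_iff' measurableSet_uIoc]
      apply Filter.Eventually.of_forall
      intro x hx
      rw [uIoc_of_le hlm'] at hx
      have h1 : ‖g x‖ = g x := Real.norm_of_nonneg (hgnn x hx)
      have h2 : 0 ≤ C * (x - lam) ^ (-(p / 2)) := by
        have : (0:ℝ) ≤ (x - lam) ^ (-(p / 2)) :=
          Real.rpow_nonneg (by linarith [hx.1]) _
        positivity
      rw [h1, Real.norm_of_nonneg h2]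
      exact hdom x hx
  -- integrability of f
  have hIntf : IntervalIntegrable f volume lam m := by
    apply hIntg.mono_fun
    · apply Measurable.aestronglyMeasurable
      simp only [hf]
      fun_prop
    · rw [Filter.EventuallyLE, ae_restrict_iff' measurableSet_uIoc]
      apply Filter.Eventually.of_forall
      intro x hx
      rw [uIoc_of_le hlm'] at hx
      rw [Real.norm_of_nonneg (hfnn x), Real.norm_of_nonneg (hgnn x hx)]
      exact hcomp x ⟨hx.1.le, hx.2⟩
  -- the derivative of G is g on the open interval
  have hderiv : ∀ x ∈ Ioo lam m, HasDerivAt G (g x) x := by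
    intro x hx
    have hx0 : 0 < x := hlam.trans hx.1
    have hsubpos : 0 < x ^ 2 - lam ^ 2 := by nlinarith [hx.1]
    have hx2ne : (x:ℝ) ^ 2 ≠ 0 := by positivity
    have h1 : HasDerivAt (fun w : ℝ => w ^ 2 - lam ^ 2) (2 * x) x := by
      simpa using (hasDerivAt_pow 2 x).sub_const (lam ^ 2)
    have h2 : HasDerivAt (fun w : ℝ => w ^ 2) (2 * x) x := by
      simpa using hasDerivAt_pow 2 x
    have hu : HasDerivAt (fun w : ℝ => (w ^ 2 - lam ^ 2) / w ^ 2)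
        ((2 * x * x ^ 2 - (x ^ 2 - lam ^ 2) * (2 * x)) / (x ^ 2) ^ 2) x := h1.div h2 hx2ne
    have hu' : HasDerivAt (fun w : ℝ => (w ^ 2 - lam ^ 2) / w ^ 2)
        (2 * lam ^ 2 / x ^ 3) x := by
      convert hu using 1
      field_simp
      ring
    have hupos : 0 < (x ^ 2 - lam ^ 2) / x ^ 2 := by positivity
    have hrp := (hu'.rpow_const (p := 1 - p / 2) (Or.inl hupos.ne')).const_mul (2 / (2 - p))
    convert hrp using 1
    · rfl
    · rfl
    have he : (1 - p / 2) - 1 = -(p / 2) := by ring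
    rw [he]
    have e1 : ((x ^ 2 - lam ^ 2) / x ^ 2) ^ (-(p / 2))
        = (x ^ 2) ^ (p / 2) / (x ^ 2 - lam ^ 2) ^ (p / 2) := by
      rw [Real.rpow_neg (by positivity), Real.div_rpow hsubpos.le (sq_nonneg x), inv_div]
    have e2 : ((x:ℝ) ^ 2) ^ (p / 2) = x ^ p := by
      rw [← Real.rpow_natCast x 2, ← Real.rpow_mul hx0.le]
      congr 1
      push_cast
      ring
    have e3 : x ^ p / (x:ℝ) ^ 3 = x ^ (p - 3) := by
      rw [← Real.rpow_natCast x 3, ← Real.rpow_sub hx0]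
      norm_num
    have hgx : g x = 2 * lam ^ 2 * x ^ (p - 3) / (x ^ 2 - lam ^ 2) ^ (p / 2) := rfl
    rw [hgx, e1, e2, ← e3]
    have hrne : (x ^ 2 - lam ^ 2) ^ (p / 2) ≠ 0 := (Real.rpow_pos_of_pos hsubpos _).ne'
    field_simp
  -- continuity of G on the closed interval
  have hcont : ContinuousOn G (Icc lam m) := by
    apply ContinuousOn.mul continuousOn_const
    apply ContinuousOn.rpow_const
    · apply ContinuousOn.div
      · exact (continuous_id.pow 2 |>.sub continuous_const).continuousOn
      · exact (continuous_id.pow 2).continuousOn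
      · intro x hx
        have : 0 < x := hlam.trans_le hx.1
        positivity
    · intro x hx
      right; linarith
  -- fundamental theorem of calculus
  have hFTC : ∫ x in lam..m, g x = G m - G lam :=
    integral_eq_sub_of_hasDerivAt_of_le hlm' hcont hderiv hIntg
  have hGlam : G lam = 0 := by
    simp only [hG, sub_self, zero_div]
    rw [Real.zero_rpow (by intro h; rw [sub_eq_zero] at h; linarith)]
    ring
  have hGm : G m = (2 / (2 - p)) * b ^ (1 - p / 2) := by
    have hb' : (m ^ 2 - lam ^ 2) / m ^ 2 = b := by
      rw [hmsq]
      field_simp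
      ring
    simp only [hG, hb']
  have hGmle : G m ≤ 1 / (1 - p / 2) := by
    rw [hGm]
    have h1 : b ^ (1 - p / 2) ≤ 1 :=
      Real.rpow_le_one hb0.le (by linarith) (by linarith)
    have h2 : (0:ℝ) < 2 / (2 - p) := by positivity
    have h3 : 2 / (2 - p) = 1 / (1 - p / 2) := by
      field_simp
    calc 2 / (2 - p) * b ^ (1 - p / 2) ≤ 2 / (2 - p) * 1 :=
      mul_le_mul_of_nonneg_left h1 h2.le
      _ = 1 / (1 - p / 2) := by rw [mul_one, h3]
  calc ∫ w in lam..m, f w ≤ ∫ w in lam..m, g w :=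
        intervalIntegral.integral_mono_on hlm' hIntf hIntg hcomp
    _ = G m - G lam := hFTC
    _ ≤ 1 / (1 - p / 2) := by rw [hGlam]; linarith [hGmle]
end
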